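/- arXiv:1311.1731 — 5 statements merged into one kernel-verified Lean document; each statement's English description precedes it below -/
import Mathlib

section
/- Almost surely, the conditional expectation of the estimator d̂_{ij} given (u_i, u_j) equals d_{ij}; in particular, the estimator d̂_{ij} is an unbiased estimator of the distance d_{ij}. -/
open MeasureTheory ProbabilityTheory

/-- The estimator `r̂_{ij}^k` built from the observed graphs `G_0, …, G_{2T-1}`. -/
noncomputable def rhat {Ω : Type*} {n : ℕ} (T : ℕ) (G : ℕ → Fin n → Fin n → Ω → ℝ)
    (i j k : Fin n) (ω : Ω) : ℝ :=
  (1 / (T : ℝ) ^ 2) * (∑ t ∈ Finset.range T, G t i k ω) *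
    (∑ t ∈ Finset.Ico T (2 * T), G t j k ω)

/-- The estimator `ĉ_{ij}^k` built from the observed graphs `G_0, …, G_{2T-1}`. -/
noncomputable def chat {Ω : Type*} {n : ℕ} (T : ℕ) (G : ℕ → Fin n → Fin n → Ω → ℝ)
    (i j k : Fin n) (ω : Ω) : ℝ :=
  (1 / (T : ℝ) ^ 2) * (∑ t ∈ Finset.range T, G t k i ω) *
    (∑ t ∈ Finset.Ico T (2 * T), G t k j ω)

/-- The estimator `d̂_{ij}`, averaging over the neighbourhood `𝒮 = {1,…,n} \ {i,j}`,
whose cardinality is `n - 2`. -/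
noncomputable def dhat {Ω : Type*} {n : ℕ} (T : ℕ) (G : ℕ → Fin n → Fin n → Ω → ℝ)
    (i j : Fin n) (ω : Ω) : ℝ :=
  (1 / (2 * ((n : ℝ) - 2))) * ∑ k ∈ ({i, j}ᶜ : Finset (Fin n)),
    ((rhat T G i i k ω - rhat T G i j k ω - rhat T G j i k ω + rhat T G j j k ω) +
      (chat T G i i k ω - chat T G i j k ω - chat T G j i k ω + chat T G j j k ω))

/-- The distance `d(x,y) = ½(∫₀¹ (w(s,x)−w(s,y))² ds + ∫₀¹ (w(x,t)−w(y,t))² dt)`. -/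
noncomputable def graphonDist (w : ℝ → ℝ → ℝ) (x y : ℝ) : ℝ :=
  (1 / 2) * ((∫ s in (0:ℝ)..1, (w s x - w s y) ^ 2) + (∫ t in (0:ℝ)..1, (w x t - w y t) ^ 2))

/-- The σ-algebra generated by the labels `u_1, …, u_n`. -/
def sigmaAlgebraOf {Ω : Type*} [MeasurableSpace Ω] {n : ℕ} (u : Fin n → Ω → ℝ) :
    MeasurableSpace Ω :=
  MeasurableSpace.comap (fun ω k => u k ω) MeasurableSpace.pi

/- ### Auxiliary lemmas -/

lemma sba_integrable_of_bounded {Ω : Type*} [MeasurableSpace Ω] {μ : Measure Ω}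
    [IsFiniteMeasure μ] {f : Ω → ℝ} {C : ℝ} (hm : Measurable f) (h : ∀ ω, |f ω| ≤ C) :
    Integrable f μ :=
  ⟨hm.aestronglyMeasurable,
    HasFiniteIntegral.of_bounded (C := C) (Filter.Eventually.of_forall fun ω => by
      simpa [Real.norm_eq_abs] using h ω)⟩

lemma sba_condexp_mul_of_zero_one {Ω : Type*} [mΩ : MeasurableSpace Ω] [StandardBorelSpace Ω]
    {μ : Measure Ω} [IsProbabilityMeasure μ] {m' : MeasurableSpace Ω} (hm' : m' ≤ mΩ)
    {f g : Ω → ℝ} (hf : @Measurable Ω ℝ mΩ _ f) (hg : @Measurable Ω ℝ mΩ _ g)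
    (hf01 : ∀ ω, f ω = 0 ∨ f ω = 1) (hg01 : ∀ ω, g ω = 0 ∨ g ω = 1)
    (hind : CondIndepFun m' hm' f g μ) :
    μ[fun ω => f ω * g ω | m'] =ᵐ[μ] fun ω => (μ[f|m']) ω * (μ[g|m']) ω := by
  have hfi : f = Set.indicator (f ⁻¹' {1}) (fun _ => (1:ℝ)) := by
    funext ω; rcases hf01 ω with h | h <;>
      simp [Set.indicator_apply, Set.mem_preimage, h]
  have hgi : g = Set.indicator (g ⁻¹' {1}) (fun _ => (1:ℝ)) := by
    funext ω; rcases hg01 ω with h | h <;>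
      simp [Set.indicator_apply, Set.mem_preimage, h]
  have hfgi : (fun ω => f ω * g ω)
      = Set.indicator (f ⁻¹' {1} ∩ g ⁻¹' {1}) (fun _ => (1:ℝ)) := by
    funext ω
    rcases hf01 ω with h | h <;> rcases hg01 ω with h' | h' <;>
      simp [Set.indicator_apply, Set.mem_preimage, h, h']
  have key := (condIndepFun_iff_condExp_inter_preimage_eq_mul (mΩ := mΩ) (m' := m')
      (hm' := hm') (μ := μ) hf hg).mp hind
    {1} {1} (measurableSet_singleton 1) (measurableSet_singleton 1)
  calc μ[fun ω => f ω * g ω | m']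
      = μ⟦f ⁻¹' {1} ∩ g ⁻¹' {1} | m'⟧ := by rw [← hfgi]
    _ =ᵐ[μ] fun ω => (μ⟦f ⁻¹' {1}|m'⟧) ω * (μ⟦g ⁻¹' {1}|m'⟧) ω := key
    _ = fun ω => (μ[f|m']) ω * (μ[g|m']) ω := by rw [← hfi, ← hgi]

theorem sba_dhat_unbiased
    {Ω : Type*} [m0 : MeasurableSpace Ω] [StandardBorelSpace Ω]
    (μ : Measure Ω) [IsProbabilityMeasure μ]
    (n T : ℕ) (hn : 3 ≤ n) (hT : 1 ≤ T)
    (w : ℝ → ℝ → ℝ) (hw_meas : Measurable fun p : ℝ × ℝ => w p.1 p.2)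
    (hw01 : ∀ x y, w x y ∈ Set.Icc (0:ℝ) 1)
    (u : Fin n → Ω → ℝ) (hu_meas : ∀ i, Measurable (u i))
    (hu_indep : iIndepFun (m := fun _ => Real.measurableSpace) u μ)
    (hu_unif : ∀ i, Measure.map (u i) μ = volume.restrict (Set.Icc (0:ℝ) 1))
    (G : ℕ → Fin n → Fin n → Ω → ℝ)
    (hG_meas : ∀ t i j, Measurable (G t i j))
    (hG01 : ∀ t (i j : Fin n) (ω : Ω), G t i j ω = 0 ∨ G t i j ω = 1)
    (hG_cond : ∀ t, t < 2 * T → ∀ i j : Fin n, i ≠ j →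
      μ[G t i j | sigmaAlgebraOf u] =ᵐ[μ] fun ω => w (u i ω) (u j ω))
    (hG_condIndep : iCondIndepFun (sigmaAlgebraOf u)
      ((measurable_pi_iff.mpr hu_meas).comap_le)
      (m := fun _ => Real.measurableSpace)
      (fun q : {q : ℕ × Fin n × Fin n // q.1 < 2 * T ∧ q.2.1 ≠ q.2.2} =>
        G q.1.1 q.1.2.1 q.1.2.2) μ)
    (i j : Fin n) (hij : i ≠ j) :
    (μ[dhat T G i j | MeasurableSpace.comap (fun ω => (u i ω, u j ω)) inferInstance]
        =ᵐ[μ] fun ω => graphonDist w (u i ω) (u j ω)) ∧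
      ∫ ω, dhat T G i j ω ∂μ = ∫ ω, graphonDist w (u i ω) (u j ω) ∂μ := by
  classical
  have hm' : sigmaAlgebraOf u ≤ m0 := (measurable_pi_iff.mpr hu_meas).comap_le
  have hTpos : (0:ℝ) < T := by exact_mod_cast hT
  have hTne : (T:ℝ) ≠ 0 := ne_of_gt hTpos
  -- basic bounds on G
  have hGb : ∀ t a b (ω : Ω), |G t a b ω| ≤ 1 := by
    intro t a b ω; rcases hG01 t a b ω with h | h <;> simp [h]
  -- integrability of products
  have hGprod_int : ∀ t1 t2 (a b c d : Fin n),
      Integrable (fun ω => G t1 a b ω * G t2 c d ω) μ := by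
    intro t1 t2 a b c d
    refine sba_integrable_of_bounded ((hG_meas t1 a b).mul (hG_meas t2 c d)) (C := 1) ?_
    intro ω
    calc |G t1 a b ω * G t2 c d ω| = |G t1 a b ω| * |G t2 c d ω| := abs_mul _ _
      _ ≤ 1 * 1 := mul_le_mul (hGb _ _ _ _) (hGb _ _ _ _) (abs_nonneg _) zero_le_one
      _ = 1 := one_mul 1
  -- Step A1: conditional expectation of pair products
  have hprod : ∀ (t1 t2 : ℕ) (a b c d : Fin n), t1 < 2*T → t2 < 2*T → a ≠ b → c ≠ d →
      (t1 : ℕ) ≠ t2 →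
      μ[fun ω => G t1 a b ω * G t2 c d ω | sigmaAlgebraOf u]
        =ᵐ[μ] fun ω => w (u a ω) (u b ω) * w (u c ω) (u d ω) := by
    intro t1 t2 a b c d ht1 ht2 hab hcd hne
    have hq : (⟨(t1, a, b), ⟨ht1, hab⟩⟩ :
          {q : ℕ × Fin n × Fin n // q.1 < 2 * T ∧ q.2.1 ≠ q.2.2})
        ≠ ⟨(t2, c, d), ⟨ht2, hcd⟩⟩ := by
      intro h
      exact hne (congrArg (fun q => q.1.1) h)
    have hci := hG_condIndep.condIndepFun hq
    have hmul := sba_condexp_mul_of_zero_one hm' (hG_meas t1 a b) (hG_meas t2 c d)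
      (hG01 t1 a b) (hG01 t2 c d) hci
    refine hmul.trans ?_
    filter_upwards [hG_cond t1 ht1 a b hab, hG_cond t2 ht2 c d hcd] with ω h1 h2
    simp [h1, h2]
  -- Step A2: conditional expectation of rhat
  have hrhat : ∀ (a b k : Fin n), a ≠ k → b ≠ k →
      μ[rhat T G a b k | sigmaAlgebraOf u]
        =ᵐ[μ] fun ω => w (u a ω) (u k ω) * w (u b ω) (u k ω) := by
    intro a b k hak hbk
    have hfun : rhat T G a b k = (1 / (T:ℝ)^2) •
        ∑ p ∈ (Finset.range T) ×ˢ (Finset.Ico T (2*T)),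
          (fun ω => G p.1 a k ω * G p.2 b k ω) := by
      funext ω
      simp only [rhat, Pi.smul_apply, Finset.sum_apply, smul_eq_mul, mul_assoc,
        Finset.sum_mul_sum, Finset.sum_product]
    rw [hfun]
    refine (condExp_smul _ _ _).trans ?_
    have hsum := condExp_finsetSum (μ := μ) (m := sigmaAlgebraOf u)
      (s := (Finset.range T) ×ˢ (Finset.Ico T (2*T)))
      (f := fun p => (fun ω => G p.1 a k ω * G p.2 b k ω))
      (fun p _ => hGprod_int p.1 p.2 a k b k)
    have hall : ∀ᵐ ω ∂μ, ∀ p ∈ (Finset.range T) ×ˢ (Finset.Ico T (2*T)),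
        (μ[(fun ω => G p.1 a k ω * G p.2 b k ω)|sigmaAlgebraOf u]) ω
          = w (u a ω) (u k ω) * w (u b ω) (u k ω) := by
      refine (ae_ball_iff (Finset.countable_toSet _)).mpr ?_
      rintro ⟨t1, t2⟩ hp
      rw [Finset.mem_coe, Finset.mem_product, Finset.mem_range, Finset.mem_Ico] at hp
      exact hprod t1 t2 a k b k (lt_of_lt_of_le hp.1 (by omega)) hp.2.2 hak hbk (by omega)
    filter_upwards [hsum, hall] with ω h1 h2
    rw [Pi.smul_apply, h1, Finset.sum_apply, Finset.sum_congr rfl h2, Finset.sum_const]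
    have hcard : ((Finset.range T) ×ˢ (Finset.Ico T (2*T))).card = T * T := by
      rw [Finset.card_product, Finset.card_range, Nat.card_Ico]
      congr 1
      omega
    rw [hcard, nsmul_eq_mul, smul_eq_mul]
    push_cast
    field_simp
  -- Step A2': conditional expectation of chat
  have hchat : ∀ (a b k : Fin n), k ≠ a → k ≠ b →
      μ[chat T G a b k | sigmaAlgebraOf u]
        =ᵐ[μ] fun ω => w (u k ω) (u a ω) * w (u k ω) (u b ω) := by
    intro a b k hka hkb
    have hfun : chat T G a b k = (1 / (T:ℝ)^2) •
        ∑ p ∈ (Finset.range T) ×ˢ (Finset.Ico T (2*T)),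
          (fun ω => G p.1 k a ω * G p.2 k b ω) := by
      funext ω
      simp only [chat, Pi.smul_apply, Finset.sum_apply, smul_eq_mul, mul_assoc,
        Finset.sum_mul_sum, Finset.sum_product]
    rw [hfun]
    refine (condExp_smul _ _ _).trans ?_
    have hsum := condExp_finsetSum (μ := μ) (m := sigmaAlgebraOf u)
      (s := (Finset.range T) ×ˢ (Finset.Ico T (2*T)))
      (f := fun p => (fun ω => G p.1 k a ω * G p.2 k b ω))
      (fun p _ => hGprod_int p.1 p.2 k a k b)
    have hall : ∀ᵐ ω ∂μ, ∀ p ∈ (Finset.range T) ×ˢ (Finset.Ico T (2*T)),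
        (μ[(fun ω => G p.1 k a ω * G p.2 k b ω)|sigmaAlgebraOf u]) ω
          = w (u k ω) (u a ω) * w (u k ω) (u b ω) := by
      refine (ae_ball_iff (Finset.countable_toSet _)).mpr ?_
      rintro ⟨t1, t2⟩ hp
      rw [Finset.mem_coe, Finset.mem_product, Finset.mem_range, Finset.mem_Ico] at hp
      exact hprod t1 t2 k a k b (lt_of_lt_of_le hp.1 (by omega)) hp.2.2 hka hkb (by omega)
    filter_upwards [hsum, hall] with ω h1 h2
    rw [Pi.smul_apply, h1, Finset.sum_apply, Finset.sum_congr rfl h2, Finset.sum_const]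
    have hcard : ((Finset.range T) ×ˢ (Finset.Ico T (2*T))).card = T * T := by
      rw [Finset.card_product, Finset.card_range, Nat.card_Ico]
      congr 1
      omega
    rw [hcard, nsmul_eq_mul, smul_eq_mul]
    push_cast
    field_simp
  -- integrability of rhat and chat
  have habs_sum : ∀ (s : Finset ℕ) (a b : Fin n) (ω : Ω),
      |∑ t ∈ s, G t a b ω| ≤ (s.card : ℝ) := by
    intro s a b ω
    calc |∑ t ∈ s, G t a b ω| ≤ ∑ t ∈ s, |G t a b ω| := Finset.abs_sum_le_sum_abs _ _
      _ ≤ ∑ _t ∈ s, (1:ℝ) := Finset.sum_le_sum fun t _ => hGb t a b ω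
      _ = (s.card : ℝ) := by simp
  have hrhat_bound : ∀ (a b k : Fin n) (ω : Ω), |rhat T G a b k ω| ≤ 1 := by
    intro a b k ω
    have h1 := habs_sum (Finset.range T) a k ω
    have h2 := habs_sum (Finset.Ico T (2*T)) b k ω
    rw [Finset.card_range] at h1
    rw [Nat.card_Ico] at h2
    have h2' : |∑ t ∈ Finset.Ico T (2*T), G t b k ω| ≤ (T:ℝ) := by
      refine h2.trans ?_
      have : 2 * T - T = T := by omega
      rw [this]
    rw [rhat, abs_mul, abs_mul]
    have hb1 : |1 / (T:ℝ)^2| = 1 / (T:ℝ)^2 := abs_of_pos (by positivity)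
    rw [hb1]
    calc 1 / (T:ℝ)^2 * |∑ t ∈ Finset.range T, G t a k ω| *
          |∑ t ∈ Finset.Ico T (2*T), G t b k ω|
        ≤ 1 / (T:ℝ)^2 * (T:ℝ) * (T:ℝ) := by
          refine mul_le_mul (mul_le_mul le_rfl h1 (abs_nonneg _) (by positivity)) h2'
            (abs_nonneg _) (by positivity)
      _ = 1 := by field_simp
  have hchat_bound : ∀ (a b k : Fin n) (ω : Ω), |chat T G a b k ω| ≤ 1 := by
    intro a b k ω
    have h1 := habs_sum (Finset.range T) k a ω
    have h2 := habs_sum (Finset.Ico T (2*T)) k b ω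
    rw [Finset.card_range] at h1
    rw [Nat.card_Ico] at h2
    have h2' : |∑ t ∈ Finset.Ico T (2*T), G t k b ω| ≤ (T:ℝ) := by
      refine h2.trans ?_
      have : 2 * T - T = T := by omega
      rw [this]
    rw [chat, abs_mul, abs_mul]
    have hb1 : |1 / (T:ℝ)^2| = 1 / (T:ℝ)^2 := abs_of_pos (by positivity)
    rw [hb1]
    calc 1 / (T:ℝ)^2 * |∑ t ∈ Finset.range T, G t k a ω| *
          |∑ t ∈ Finset.Ico T (2*T), G t k b ω|
        ≤ 1 / (T:ℝ)^2 * (T:ℝ) * (T:ℝ) := by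
          refine mul_le_mul (mul_le_mul le_rfl h1 (abs_nonneg _) (by positivity)) h2'
            (abs_nonneg _) (by positivity)
      _ = 1 := by field_simp
  have hrhat_meas : ∀ (a b k : Fin n), Measurable (rhat T G a b k) := by
    intro a b k
    unfold rhat
    exact ((measurable_const.mul (Finset.measurable_sum _ fun t _ => hG_meas t a k)).mul
      (Finset.measurable_sum _ fun t _ => hG_meas t b k))
  have hchat_meas : ∀ (a b k : Fin n), Measurable (chat T G a b k) := by
    intro a b k
    unfold chat
    exact ((measurable_const.mul (Finset.measurable_sum _ fun t _ => hG_meas t k a)).mul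
      (Finset.measurable_sum _ fun t _ => hG_meas t k b))
  have hrhat_int : ∀ (a b k : Fin n), Integrable (rhat T G a b k) μ :=
    fun a b k => sba_integrable_of_bounded (hrhat_meas a b k) (hrhat_bound a b k)
  have hchat_int : ∀ (a b k : Fin n), Integrable (chat T G a b k) μ :=
    fun a b k => sba_integrable_of_bounded (hchat_meas a b k) (hchat_bound a b k)
  -- combined conditional expectation for one k
  have hFk : ∀ k : Fin n, k ≠ i → k ≠ j →
      μ[(rhat T G i i k - rhat T G i j k - rhat T G j i k + rhat T G j j k) +
          (chat T G i i k - chat T G i j k - chat T G j i k + chat T G j j k)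
        | sigmaAlgebraOf u]
        =ᵐ[μ] fun ω => (w (u i ω) (u k ω) - w (u j ω) (u k ω))^2 +
          (w (u k ω) (u i ω) - w (u k ω) (u j ω))^2 := by
    intro k hki hkj
    have hik : i ≠ k := fun h => hki h.symm
    have hjk : j ≠ k := fun h => hkj h.symm
    have hr1 := hrhat i i k hik hik
    have hr2 := hrhat i j k hik hjk
    have hr3 := hrhat j i k hjk hik
    have hr4 := hrhat j j k hjk hjk
    have hc1 := hchat i i k hki hki
    have hc2 := hchat i j k hki hkj
    have hc3 := hchat j i k hkj hki
    have hc4 := hchat j j k hkj hkj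
    have hintR : Integrable
        (rhat T G i i k - rhat T G i j k - rhat T G j i k + rhat T G j j k) μ :=
      (((hrhat_int i i k).sub (hrhat_int i j k)).sub (hrhat_int j i k)).add (hrhat_int j j k)
    have hintC : Integrable
        (chat T G i i k - chat T G i j k - chat T G j i k + chat T G j j k) μ :=
      (((hchat_int i i k).sub (hchat_int i j k)).sub (hchat_int j i k)).add (hchat_int j j k)
    have e0 := condExp_add (μ := μ) (m := sigmaAlgebraOf u) hintR hintC
    have eR1 := condExp_add (μ := μ) (m := sigmaAlgebraOf u)
      (((hrhat_int i i k).sub (hrhat_int i j k)).sub (hrhat_int j i k)) (hrhat_int j j k)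
    have eR2 := condExp_sub (μ := μ) (m := sigmaAlgebraOf u)
      ((hrhat_int i i k).sub (hrhat_int i j k)) (hrhat_int j i k)
    have eR3 := condExp_sub (μ := μ) (m := sigmaAlgebraOf u)
      (hrhat_int i i k) (hrhat_int i j k)
    have eC1 := condExp_add (μ := μ) (m := sigmaAlgebraOf u)
      (((hchat_int i i k).sub (hchat_int i j k)).sub (hchat_int j i k)) (hchat_int j j k)
    have eC2 := condExp_sub (μ := μ) (m := sigmaAlgebraOf u)
      ((hchat_int i i k).sub (hchat_int i j k)) (hchat_int j i k)
    have eC3 := condExp_sub (μ := μ) (m := sigmaAlgebraOf u)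
      (hchat_int i i k) (hchat_int i j k)
    filter_upwards [e0, eR1, eR2, eR3, eC1, eC2, eC3, hr1, hr2, hr3, hr4, hc1, hc2, hc3, hc4]
      with ω h0 h1 h2 h3 h4 h5 h6 g1 g2 g3 g4 g5 g6 g7 g8
    rw [h0, Pi.add_apply, h1, Pi.add_apply, h2, Pi.sub_apply, h3, Pi.sub_apply,
      h4, Pi.add_apply, h5, Pi.sub_apply, h6, Pi.sub_apply, g1, g2, g3, g4, g5, g6, g7, g8]
    ring
  -- Step A3: conditional expectation of dhat given all labels
  have hdhat_fun : dhat T G i j = (1 / (2 * ((n:ℝ) - 2))) •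
      ∑ k ∈ ({i, j}ᶜ : Finset (Fin n)),
        ((rhat T G i i k - rhat T G i j k - rhat T G j i k + rhat T G j j k) +
          (chat T G i i k - chat T G i j k - chat T G j i k + chat T G j j k)) := by
    funext ω
    simp [dhat, Finset.sum_apply, smul_eq_mul]
  have hFk_int : ∀ k : Fin n, Integrable
      ((rhat T G i i k - rhat T G i j k - rhat T G j i k + rhat T G j j k) +
        (chat T G i i k - chat T G i j k - chat T G j i k + chat T G j j k)) μ :=
    fun k =>
      ((((hrhat_int i i k).sub (hrhat_int i j k)).sub (hrhat_int j i k)).add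
        (hrhat_int j j k)).add
      ((((hchat_int i i k).sub (hchat_int i j k)).sub (hchat_int j i k)).add
        (hchat_int j j k))
  have h1 : μ[dhat T G i j | sigmaAlgebraOf u] =ᵐ[μ]
      fun ω => (1 / (2 * ((n:ℝ) - 2))) * ∑ k ∈ ({i, j}ᶜ : Finset (Fin n)),
        ((w (u i ω) (u k ω) - w (u j ω) (u k ω))^2 +
          (w (u k ω) (u i ω) - w (u k ω) (u j ω))^2) := by
    rw [hdhat_fun]
    refine (condExp_smul _ _ _).trans ?_
    have hsum := condExp_finsetSum (μ := μ) (m := sigmaAlgebraOf u)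
      (s := ({i, j}ᶜ : Finset (Fin n)))
      (f := fun k =>
        ((rhat T G i i k - rhat T G i j k - rhat T G j i k + rhat T G j j k) +
          (chat T G i i k - chat T G i j k - chat T G j i k + chat T G j j k)))
      (fun k _ => hFk_int k)
    have hall : ∀ᵐ ω ∂μ, ∀ k ∈ ({i, j}ᶜ : Finset (Fin n)),
        (μ[(rhat T G i i k - rhat T G i j k - rhat T G j i k + rhat T G j j k) +
            (chat T G i i k - chat T G i j k - chat T G j i k + chat T G j j k)
          | sigmaAlgebraOf u]) ω
          = (w (u i ω) (u k ω) - w (u j ω) (u k ω))^2 +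
            (w (u k ω) (u i ω) - w (u k ω) (u j ω))^2 := by
      refine (ae_ball_iff (Finset.countable_toSet _)).mpr ?_
      intro k hk
      rw [Finset.mem_coe, Finset.mem_compl, Finset.mem_insert, Finset.mem_singleton] at hk
      push_neg at hk
      exact hFk k hk.1 hk.2
    filter_upwards [hsum, hall] with ω h1 h2
    rw [Pi.smul_apply, h1, Finset.sum_apply, Finset.sum_congr rfl h2, smul_eq_mul]
  -- Step B: condition down to (u i, u j)
  set X : Ω → ℝ × ℝ := fun ω => (u i ω, u j ω) with hX_def
  have hX : Measurable X := (hu_meas i).prodMk (hu_meas j)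
  have hm2 : MeasurableSpace.comap X inferInstance ≤ m0 := hX.comap_le
  have hm2' : MeasurableSpace.comap X inferInstance ≤ sigmaAlgebraOf u := by
    have hg : Measurable (fun v : Fin n → ℝ => (v i, v j)) :=
      (measurable_pi_apply i).prodMk (measurable_pi_apply j)
    have hXc : X = (fun v : Fin n → ℝ => (v i, v j)) ∘ (fun ω k => u k ω) := rfl
    rw [hXc, ← MeasurableSpace.comap_comp]
    exact (MeasurableSpace.comap_mono hg.comap_le)
  have hsq : ∀ a b : ℝ, 0 ≤ a → a ≤ 1 → 0 ≤ b → b ≤ 1 → (a - b)^2 ≤ 1 := by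
    intro a b h1 h2 h3 h4; nlinarith
  have hFm : Measurable (fun p : (ℝ × ℝ) × ℝ =>
      (w p.1.1 p.2 - w p.1.2 p.2)^2 + (w p.2 p.1.1 - w p.2 p.1.2)^2) := by
    have t1 : Measurable (fun p : (ℝ × ℝ) × ℝ => w p.1.1 p.2) :=
      hw_meas.comp ((measurable_fst.comp measurable_fst).prodMk measurable_snd)
    have t2 : Measurable (fun p : (ℝ × ℝ) × ℝ => w p.1.2 p.2) :=
      hw_meas.comp ((measurable_snd.comp measurable_fst).prodMk measurable_snd)
    have t3 : Measurable (fun p : (ℝ × ℝ) × ℝ => w p.2 p.1.1) :=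
      hw_meas.comp (measurable_snd.prodMk (measurable_fst.comp measurable_fst))
    have t4 : Measurable (fun p : (ℝ × ℝ) × ℝ => w p.2 p.1.2) :=
      hw_meas.comp (measurable_snd.prodMk (measurable_snd.comp measurable_fst))
    exact ((t1.sub t2).pow_const 2).add ((t3.sub t4).pow_const 2)
  have hφ : ∀ k : Fin n, k ≠ i → k ≠ j →
      μ[(fun ω => (w (u i ω) (u k ω) - w (u j ω) (u k ω))^2 +
          (w (u k ω) (u i ω) - w (u k ω) (u j ω))^2)
        | MeasurableSpace.comap X inferInstance]
        =ᵐ[μ] fun ω => ∫ y, ((w (u i ω) y - w (u j ω) y)^2 +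
          (w y (u i ω) - w y (u j ω))^2) ∂(volume.restrict (Set.Icc (0:ℝ) 1)) := by
    intro k hki hkj
    haveI : IsProbabilityMeasure (μ.map (u k)) :=
      Measure.isProbabilityMeasure_map (hu_meas k).aemeasurable
    have hY : Measurable (u k) := hu_meas k
    have hindep : IndepFun X (u k) μ :=
      hu_indep.indepFun_prodMk hu_meas i j k (fun h => hki h.symm) (fun h => hkj h.symm)
    have hmap := (indepFun_iff_map_prod_eq_prod_map_map hX.aemeasurable hY.aemeasurable).mp hindep
    have hκeq : μ.map (fun ω => (X ω, u k ω))
        = (μ.map X) ⊗ₘ Kernel.const (ℝ × ℝ) (μ.map (u k)) := by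
      rw [Measure.compProd_const, hmap]
    have hcd := condDistrib_ae_eq_of_measure_eq_compProd X hY.aemeasurable
      (κ := Kernel.const _ (μ.map (u k))) hκeq
    have hcd' := ae_of_ae_map hX.aemeasurable hcd
    have hFint : Integrable (fun ω => (fun p : (ℝ × ℝ) × ℝ =>
        (w p.1.1 p.2 - w p.1.2 p.2)^2 + (w p.2 p.1.1 - w p.2 p.1.2)^2) (X ω, u k ω)) μ := by
      refine sba_integrable_of_bounded (hFm.comp (hX.prodMk hY)) (C := 2) ?_
      intro ω
      have b1 := hsq _ _ (hw01 (u i ω) (u k ω)).1 (hw01 (u i ω) (u k ω)).2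
        (hw01 (u j ω) (u k ω)).1 (hw01 (u j ω) (u k ω)).2
      have b2 := hsq _ _ (hw01 (u k ω) (u i ω)).1 (hw01 (u k ω) (u i ω)).2
        (hw01 (u k ω) (u j ω)).1 (hw01 (u k ω) (u j ω)).2
      rw [abs_of_nonneg (by positivity)]
      simp only
      linarith
    have hce := condExp_prod_ae_eq_integral_condDistrib (μ := μ) (X := X) (Y := u k)
      (f := fun p : (ℝ × ℝ) × ℝ =>
        (w p.1.1 p.2 - w p.1.2 p.2)^2 + (w p.2 p.1.1 - w p.2 p.1.2)^2)
      hX hY.aemeasurable hFm.stronglyMeasurable hFint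
    refine hce.trans ?_
    filter_upwards [hcd'] with ω h2
    rw [h2, Kernel.const_apply, hu_unif k]
  -- probability measure on the uniform distribution
  haveI hPν : IsProbabilityMeasure (volume.restrict (Set.Icc (0:ℝ) 1)) := by
    rw [← hu_unif i]
    exact Measure.isProbabilityMeasure_map (hu_meas i).aemeasurable
  haveI : IsFiniteMeasure (μ.trim hm') := isFiniteMeasure_trim hm'
  haveI : IsFiniteMeasure (μ.trim hm2) := isFiniteMeasure_trim hm2
  -- integrability of each φ k
  have hφ_meas : ∀ k : Fin n, Measurable (fun ω =>
      (w (u i ω) (u k ω) - w (u j ω) (u k ω))^2 +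
        (w (u k ω) (u i ω) - w (u k ω) (u j ω))^2) := by
    intro k
    have t1 : Measurable (fun ω => w (u i ω) (u k ω)) :=
      hw_meas.comp ((hu_meas i).prodMk (hu_meas k))
    have t2 : Measurable (fun ω => w (u j ω) (u k ω)) :=
      hw_meas.comp ((hu_meas j).prodMk (hu_meas k))
    have t3 : Measurable (fun ω => w (u k ω) (u i ω)) :=
      hw_meas.comp ((hu_meas k).prodMk (hu_meas i))
    have t4 : Measurable (fun ω => w (u k ω) (u j ω)) :=
      hw_meas.comp ((hu_meas k).prodMk (hu_meas j))
    exact ((t1.sub t2).pow_const 2).add ((t3.sub t4).pow_const 2)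
  have hφ_int : ∀ k : Fin n, Integrable (fun ω =>
      (w (u i ω) (u k ω) - w (u j ω) (u k ω))^2 +
        (w (u k ω) (u i ω) - w (u k ω) (u j ω))^2) μ := by
    intro k
    refine sba_integrable_of_bounded (hφ_meas k) (C := 2) ?_
    intro ω
    have b1 := hsq _ _ (hw01 (u i ω) (u k ω)).1 (hw01 (u i ω) (u k ω)).2
      (hw01 (u j ω) (u k ω)).1 (hw01 (u j ω) (u k ω)).2
    have b2 := hsq _ _ (hw01 (u k ω) (u i ω)).1 (hw01 (u k ω) (u i ω)).2
      (hw01 (u k ω) (u j ω)).1 (hw01 (u k ω) (u j ω)).2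
    rw [abs_of_nonneg (by positivity)]
    linarith
  -- cardinality of the complement
  have hcard2 : ({i, j}ᶜ : Finset (Fin n)).card = n - 2 := by
    have h2 : ({i, j} : Finset (Fin n)).card = 2 := by
      rw [Finset.card_insert_of_notMem (by simp [hij]), Finset.card_singleton]
    rw [Finset.card_compl, h2, Fintype.card_fin]
  have hn2 : ((n - 2 : ℕ) : ℝ) = (n:ℝ) - 2 := by
    have : 2 ≤ n := by omega
    push_cast [Nat.cast_sub this]
    ring
  have hn2ne : (n:ℝ) - 2 ≠ 0 := by
    have : (3:ℝ) ≤ (n:ℝ) := by exact_mod_cast hn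
    linarith
  -- conditional expectation of D given (u i, u j)
  have hD_fun : (fun ω => (1 / (2 * ((n:ℝ) - 2))) * ∑ k ∈ ({i, j}ᶜ : Finset (Fin n)),
        ((w (u i ω) (u k ω) - w (u j ω) (u k ω))^2 +
          (w (u k ω) (u i ω) - w (u k ω) (u j ω))^2))
      = (1 / (2 * ((n:ℝ) - 2))) • ∑ k ∈ ({i, j}ᶜ : Finset (Fin n)),
        (fun ω => (w (u i ω) (u k ω) - w (u j ω) (u k ω))^2 +
          (w (u k ω) (u i ω) - w (u k ω) (u j ω))^2) := by
    funext ω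
    simp [Finset.sum_apply, smul_eq_mul]
  have h2D : μ[(fun ω => (1 / (2 * ((n:ℝ) - 2))) * ∑ k ∈ ({i, j}ᶜ : Finset (Fin n)),
        ((w (u i ω) (u k ω) - w (u j ω) (u k ω))^2 +
          (w (u k ω) (u i ω) - w (u k ω) (u j ω))^2))
      | MeasurableSpace.comap X inferInstance]
      =ᵐ[μ] fun ω => graphonDist w (u i ω) (u j ω) := by
    rw [hD_fun]
    refine (condExp_smul _ _ _).trans ?_
    have hsum := condExp_finsetSum (μ := μ) (m := MeasurableSpace.comap X inferInstance)
      (s := ({i, j}ᶜ : Finset (Fin n)))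
      (f := fun k => (fun ω => (w (u i ω) (u k ω) - w (u j ω) (u k ω))^2 +
          (w (u k ω) (u i ω) - w (u k ω) (u j ω))^2))
      (fun k _ => hφ_int k)
    have hall : ∀ᵐ ω ∂μ, ∀ k ∈ ({i, j}ᶜ : Finset (Fin n)),
        (μ[(fun ω => (w (u i ω) (u k ω) - w (u j ω) (u k ω))^2 +
            (w (u k ω) (u i ω) - w (u k ω) (u j ω))^2)
          | MeasurableSpace.comap X inferInstance]) ω
          = ∫ y, ((w (u i ω) y - w (u j ω) y)^2 +
              (w y (u i ω) - w y (u j ω))^2) ∂(volume.restrict (Set.Icc (0:ℝ) 1)) := by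
      refine (ae_ball_iff (Finset.countable_toSet _)).mpr ?_
      intro k hk
      rw [Finset.mem_coe, Finset.mem_compl, Finset.mem_insert, Finset.mem_singleton] at hk
      push_neg at hk
      exact hφ k hk.1 hk.2
    filter_upwards [hsum, hall] with ω hs ha
    rw [Pi.smul_apply, hs, Finset.sum_apply, Finset.sum_congr rfl ha, Finset.sum_const,
      hcard2, nsmul_eq_mul, smul_eq_mul, hn2]
    -- split the integral and identify with graphonDist
    have hint1 : Integrable (fun y => (w (u i ω) y - w (u j ω) y)^2)
        (volume.restrict (Set.Icc (0:ℝ) 1)) := by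
      refine sba_integrable_of_bounded ?_ (C := 1) ?_
      · have ta : Measurable (fun y => w (u i ω) y) :=
          hw_meas.comp (measurable_const.prodMk measurable_id)
        have tb : Measurable (fun y => w (u j ω) y) :=
          hw_meas.comp (measurable_const.prodMk measurable_id)
        exact (ta.sub tb).pow_const 2
      · intro y
        have := hsq _ _ (hw01 (u i ω) y).1 (hw01 (u i ω) y).2
          (hw01 (u j ω) y).1 (hw01 (u j ω) y).2
        rw [abs_of_nonneg (by positivity)]
        exact this
    have hint2 : Integrable (fun y => (w y (u i ω) - w y (u j ω))^2)
        (volume.restrict (Set.Icc (0:ℝ) 1)) := by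
      refine sba_integrable_of_bounded ?_ (C := 1) ?_
      · have ta : Measurable (fun y => w y (u i ω)) :=
          hw_meas.comp (measurable_id.prodMk measurable_const)
        have tb : Measurable (fun y => w y (u j ω)) :=
          hw_meas.comp (measurable_id.prodMk measurable_const)
        exact (ta.sub tb).pow_const 2
      · intro y
        have := hsq _ _ (hw01 y (u i ω)).1 (hw01 y (u i ω)).2
          (hw01 y (u j ω)).1 (hw01 y (u j ω)).2
        rw [abs_of_nonneg (by positivity)]
        exact this
    rw [integral_add hint1 hint2]
    have e1 : ∫ y in Set.Icc (0:ℝ) 1, (w (u i ω) y - w (u j ω) y)^2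
        = ∫ y in (0:ℝ)..1, (w (u i ω) y - w (u j ω) y)^2 := by
      rw [intervalIntegral.integral_of_le zero_le_one, integral_Icc_eq_integral_Ioc]
    have e2 : ∫ y in Set.Icc (0:ℝ) 1, (w y (u i ω) - w y (u j ω))^2
        = ∫ y in (0:ℝ)..1, (w y (u i ω) - w y (u j ω))^2 := by
      rw [intervalIntegral.integral_of_le zero_le_one, integral_Icc_eq_integral_Ioc]
    rw [e1, e2, graphonDist]
    field_simp
    ring
  -- main almost-everywhere statement
  have hmain : μ[dhat T G i j | MeasurableSpace.comap X inferInstance]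
      =ᵐ[μ] fun ω => graphonDist w (u i ω) (u j ω) := by
    have t1 := (condExp_condExp_of_le hm2' hm' (f := dhat T G i j) (μ := μ)).symm
    have t2 := condExp_congr_ae (m := MeasurableSpace.comap X inferInstance) (μ := μ) h1
    exact t1.trans (t2.trans h2D)
  refine ⟨hmain, ?_⟩
  calc ∫ ω, dhat T G i j ω ∂μ
      = ∫ ω, (μ[dhat T G i j | MeasurableSpace.comap X inferInstance]) ω ∂μ :=
        (integral_condExp hm2).symm
    _ = ∫ ω, graphonDist w (u i ω) (u j ω) ∂μ := integral_congr_ae hmain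
end

section
/- In the directed model, for distinct i,j,k ∈ {1,…,n}, the random variables r̂_{ij}^k and ĉ_{ij}^k are conditionally independent given (u_1,…,u_n), and consequently Var[½(r̂_{ij}^k + ĉ_{ij}^k) | u_1,…,u_n] = ¼(Var[r̂_{ij}^k | u_1,…,u_n] + Var[ĉ_{ij}^k | u_1,…,u_n]) ≤ 1/T almost surely. -/
open MeasureTheory ProbabilityTheory

/-- The conditional variance `Var[f | m] = E[(f − E[f|m])² | m]`. -/
noncomputable def condVar {Ω : Type*} (m : MeasurableSpace Ω) [m0 : MeasurableSpace Ω]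
    (μ : MeasureTheory.Measure Ω) (f : Ω → ℝ) : Ω → ℝ :=
  μ[fun ω => (f ω - (μ[f|m]) ω) ^ 2 | m]


lemma aux_ae_indepFun {Ω : Type*} {m : MeasurableSpace Ω} [mΩ : MeasurableSpace Ω] [StandardBorelSpace Ω]
    {μ : Measure Ω} [IsProbabilityMeasure μ] (hm : m ≤ mΩ)
    {X Y : Ω → ℝ} (hX : Measurable X) (hY : Measurable Y)
    (h : CondIndepFun m hm X Y μ) :
    ∀ᵐ ω ∂μ, IndepFun X Y (condExpKernel μ m ω) := by
  have hcount : (⋃ a : ℚ, {Set.Iio (a : ℝ)} : Set (Set ℝ)).Countable :=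
    Set.countable_iUnion fun _ => Set.countable_singleton _
  have hmeas : ∀ s ∈ (⋃ a : ℚ, {Set.Iio (a : ℝ)} : Set (Set ℝ)), MeasurableSet s := by
    rintro s hs
    simp only [Set.mem_iUnion, Set.mem_singleton_iff] at hs
    obtain ⟨a, rfl⟩ := hs
    exact measurableSet_Iio
  have h' : ∀ᵐ ω ∂(μ.trim hm), ∀ s ∈ (⋃ a : ℚ, {Set.Iio (a : ℝ)} : Set (Set ℝ)),
      ∀ t ∈ (⋃ a : ℚ, {Set.Iio (a : ℝ)} : Set (Set ℝ)),
      condExpKernel μ m ω (X ⁻¹' s ∩ Y ⁻¹' t)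
        = condExpKernel μ m ω (X ⁻¹' s) * condExpKernel μ m ω (Y ⁻¹' t) := by
    rw [ae_ball_iff hcount]
    intro s hs
    rw [ae_ball_iff hcount]
    intro t ht
    exact Kernel.IndepFun.measure_inter_preimage_eq_mul h s t (hmeas s hs) (hmeas t ht)
  have h'' := ae_of_ae_trim hm h'
  have hgen : (Real.measurableSpace : MeasurableSpace ℝ)
      = MeasurableSpace.generateFrom (⋃ a : ℚ, {Set.Iio (a : ℝ)}) := by
    rw [show (Real.measurableSpace : MeasurableSpace ℝ) = borel ℝ from BorelSpace.measurable_eq,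
      Real.borel_eq_generateFrom_Iio_rat]
  filter_upwards [h''] with ω hω
  have hpi := Real.isPiSystem_Iio_rat
  refine IndepSets.indep (hX.comap_le) (hY.comap_le) (hpi.comap X) (hpi.comap Y) ?_ ?_ ?_
  · rw [hgen, MeasurableSpace.comap_generateFrom]; rfl
  · rw [hgen, MeasurableSpace.comap_generateFrom]; rfl
  · rintro t1 t2 ⟨s, hs, rfl⟩ ⟨t, ht, rfl⟩
    exact Filter.Eventually.of_forall fun _ => hω s hs t ht

lemma aux_integrable_of_bound {Ω : Type*} [mΩ : MeasurableSpace Ω]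
    {μ : Measure Ω} [IsProbabilityMeasure μ] {X : Ω → ℝ} (hX : Measurable X)
    (C : ℝ) (hb : ∀ ω, |X ω| ≤ C) : Integrable X μ :=
  (integrable_const C).mono' hX.aestronglyMeasurable
    (Filter.Eventually.of_forall fun ω => by simpa [Real.norm_eq_abs] using hb ω)

lemma aux_condexp_mul {Ω : Type*} {m : MeasurableSpace Ω} [mΩ : MeasurableSpace Ω] [StandardBorelSpace Ω]
    {μ : Measure Ω} [IsProbabilityMeasure μ] (hm : m ≤ mΩ)
    {X Y : Ω → ℝ} (hX : Measurable X) (hY : Measurable Y)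
    {CX CY : ℝ} (hXb : ∀ ω, |X ω| ≤ CX) (hYb : ∀ ω, |Y ω| ≤ CY)
    (h : CondIndepFun m hm X Y μ) :
    μ[fun ω => X ω * Y ω|m] =ᵐ[μ] fun ω => (μ[X|m]) ω * (μ[Y|m]) ω := by
  have hXi : Integrable X μ := aux_integrable_of_bound hX CX hXb
  have hYi : Integrable Y μ := aux_integrable_of_bound hY CY hYb
  have hXYi : Integrable (fun ω => X ω * Y ω) μ := by
    refine aux_integrable_of_bound (hX.mul hY) (CX * CY) fun ω => ?_
    rw [abs_mul]
    exact mul_le_mul (hXb ω) (hYb ω) (abs_nonneg _) ((abs_nonneg _).trans (hXb ω))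
  have hk := aux_ae_indepFun hm hX hY h
  have e1 := condExp_ae_eq_integral_condExpKernel hm hXYi
  have e2 := condExp_ae_eq_integral_condExpKernel hm hXi
  have e3 := condExp_ae_eq_integral_condExpKernel hm hYi
  filter_upwards [e1, e2, e3, hk] with ω h1 h2 h3 h4
  rw [h1, h2, h3]
  exact h4.integral_fun_mul_eq_mul_integral hX.aestronglyMeasurable hY.aestronglyMeasurable

lemma aux_condVar_eq {Ω : Type*} {m : MeasurableSpace Ω} [mΩ : MeasurableSpace Ω]
    {μ : Measure Ω} [IsProbabilityMeasure μ] (hm : m ≤ mΩ)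
    {f : Ω → ℝ} (hf : Measurable f) {C : ℝ} (hb : ∀ ω, |f ω| ≤ C)
    (hC0 : 0 ≤ C) :
    condVar m μ f =ᵐ[μ] fun ω => (μ[fun ω' => f ω' ^ 2|m]) ω - ((μ[f|m]) ω) ^ 2 := by
  set g : Ω → ℝ := μ[f|m] with hgdef
  have hfi : Integrable f μ := aux_integrable_of_bound hf C hb
  have hf2i : Integrable (fun ω => f ω ^ 2) μ := by
    refine aux_integrable_of_bound (hf.pow_const 2) (C ^ 2) fun ω => ?_
    rw [abs_pow]
    exact pow_le_pow_left₀ (abs_nonneg _) (hb ω) 2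
  have hgm : StronglyMeasurable[m] g := stronglyMeasurable_condExp
  have hgaesm : AEStronglyMeasurable g μ := (hgm.mono hm).aestronglyMeasurable
  have hgb' : ∀ᵐ ω ∂μ, ‖g ω‖ ≤ ((⟨C, hC0⟩ : NNReal) : ℝ) := by
    filter_upwards [ae_bdd_condExp_of_ae_bdd (m := m) (μ := μ) (R := ⟨C, hC0⟩)
      (Filter.Eventually.of_forall fun ω => by exact hb ω)] with ω hω
    rw [Real.norm_eq_abs]; exact hω
  have hgfi : Integrable (g * f) μ := hfi.bdd_mul hgaesm hgb'
  have hggi : Integrable (g * g) μ := integrable_condExp.bdd_mul hgaesm hgb'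
  have e_mul : μ[g * f|m] =ᵐ[μ] g * μ[f|m] :=
    condExp_stronglyMeasurable_mul_of_bound hm hgm hfi _ hgb'
  have e_gg : μ[g * g|m] = g * g := condExp_of_stronglyMeasurable hm (hgm.mul hgm) hggi
  have hfun : (fun ω => (f ω - g ω) ^ 2)
      = (fun ω => f ω ^ 2 + (g * g) ω) - fun ω => (2 : ℝ) * (g * f) ω := by
    funext ω; simp only [Pi.sub_apply, Pi.mul_apply]; ring
  have e1 : μ[(fun ω => f ω ^ 2 + (g * g) ω) - fun ω => (2 : ℝ) * (g * f) ω|m]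
      =ᵐ[μ] μ[fun ω => f ω ^ 2 + (g * g) ω|m] - μ[fun ω => (2 : ℝ) * (g * f) ω|m] :=
    condExp_sub (hf2i.add hggi) (hgfi.const_mul 2) _
  have e2 : μ[fun ω => f ω ^ 2 + (g * g) ω|m]
      =ᵐ[μ] μ[fun ω => f ω ^ 2|m] + μ[g * g|m] := condExp_add hf2i hggi _
  have e3 : μ[fun ω => (2 : ℝ) * (g * f) ω|m] =ᵐ[μ] (2 : ℝ) • μ[g * f|m] :=
    condExp_smul (2 : ℝ) (g * f) _
  have : condVar m μ f = μ[(fun ω => f ω ^ 2 + (g * g) ω) - fun ω => (2 : ℝ) * (g * f) ω|m] := by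
    simp only [_root_.condVar]; rw [← hfun, ← hgdef]
  rw [this]
  filter_upwards [e1, e2, e3, e_mul] with ω h1 h2 h3 h4
  have h5 : (μ[g * g|m]) ω = g ω * g ω := by rw [e_gg]; rfl
  simp only [Pi.sub_apply, Pi.add_apply, Pi.smul_apply, smul_eq_mul, Pi.mul_apply] at h1 h2 h3 h4 ⊢
  rw [h1, h2, h3, h4, h5]
  ring

lemma aux_Vbound {T p q : ℝ} (hT : 1 ≤ T) (hp0 : 0 ≤ p) (hp1 : p ≤ 1)
    (hq0 : 0 ≤ q) (hq1 : q ≤ 1) :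
    1 / T ^ 4 * ((T * p + (T ^ 2 - T) * p ^ 2) * (T * q + (T ^ 2 - T) * q ^ 2))
      - (p * q) ^ 2 ≤ 2 / T := by
  have hT0 : (0 : ℝ) < T := lt_of_lt_of_le one_pos hT
  have h1p : 0 ≤ 1 - p := by linarith
  have h1q : 0 ≤ 1 - q := by linarith
  have hpq : p * q ≤ 1 := mul_le_one₀ hp1 hq0 hq1
  have hpqn : 0 ≤ p * q := mul_nonneg hp0 hq0
  have hr1 : (1 - p) * (1 - q) ≤ 1 := by nlinarith
  have hr1n : 0 ≤ (1 - p) * (1 - q) := mul_nonneg h1p h1q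
  have hc1 : p * q * ((1 - p) * (1 - q)) ≤ 1 := mul_le_one₀ hpq hr1n hr1
  have hr2 : p * (1 - q) + q * (1 - p) ≤ 1 := by nlinarith
  have hr2n : 0 ≤ p * (1 - q) + q * (1 - p) :=
    add_nonneg (mul_nonneg hp0 h1q) (mul_nonneg hq0 h1p)
  have hc2 : p * q * (p * (1 - q) + q * (1 - p)) ≤ 1 := mul_le_one₀ hpq hr2n hr2
  have hc1n : 0 ≤ p * q * ((1 - p) * (1 - q)) := by positivity
  have hc2n : 0 ≤ p * q * (p * (1 - q) + q * (1 - p)) := by positivity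
  have hT34 : T ^ 3 ≤ T ^ 4 := pow_le_pow_right₀ hT (by norm_num)
  rw [div_mul_eq_mul_div, one_mul, sub_le_iff_le_add, div_add' _ _ _ (ne_of_gt hT0),
    div_le_div_iff₀ (by positivity) hT0]
  nlinarith [mul_nonneg (sub_nonneg.2 hT34) hc1n,
    mul_nonneg (pow_nonneg hT0.le 4) (sub_nonneg.2 hc1),
    mul_nonneg (pow_nonneg hT0.le 4) (sub_nonneg.2 hc2),
    mul_nonneg (pow_nonneg hT0.le 3) hc1n, mul_nonneg (pow_nonneg hT0.le 4) hc2n]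


abbrev EdgeIdx (n T : ℕ) := {q : ℕ × Fin n × Fin n // q.1 < 2 * T ∧ q.2.1 ≠ q.2.2}

lemma aux_diag_sum (s : Finset ℕ) (c d : ℝ) :
    ∑ t₁ ∈ s, ∑ t₂ ∈ s, (if t₁ = t₂ then c else d)
      = (s.card : ℝ) * c + ((s.card : ℝ) ^ 2 - s.card) * d := by
  have h : ∀ t₁ ∈ s, ∑ t₂ ∈ s, (if t₁ = t₂ then c else d) = (s.card : ℝ) * d + (c - d) := by
    intro t₁ ht₁
    have : ∀ t₂ ∈ s, (if t₁ = t₂ then c else d) = d + (if t₁ = t₂ then c - d else 0) := by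
      intro t₂ _; split_ifs <;> ring
    rw [Finset.sum_congr rfl this, Finset.sum_add_distrib, Finset.sum_const,
      Finset.sum_ite_eq s t₁ (fun _ => c - d), if_pos ht₁, nsmul_eq_mul]
  rw [Finset.sum_congr rfl h, Finset.sum_const, nsmul_eq_mul]
  ring

theorem sba_rhat_chat_condIndep_condVar
    {Ω : Type*} [m0 : MeasurableSpace Ω] [StandardBorelSpace Ω]
    (μ : Measure Ω) [IsProbabilityMeasure μ]
    (n T : ℕ) (hn : 3 ≤ n) (hT : 1 ≤ T)
    (w : ℝ → ℝ → ℝ) (hw_meas : Measurable fun p : ℝ × ℝ => w p.1 p.2)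
    (hw01 : ∀ x y, w x y ∈ Set.Icc (0:ℝ) 1)
    (u : Fin n → Ω → ℝ) (hu_meas : ∀ i, Measurable (u i))
    (hu_indep : iIndepFun u μ)
    (hu_unif : ∀ i, Measure.map (u i) μ = volume.restrict (Set.Icc (0:ℝ) 1))
    (G : ℕ → Fin n → Fin n → Ω → ℝ)
    (hG_meas : ∀ t i j, Measurable (G t i j))
    (hG01 : ∀ t (i j : Fin n) (ω : Ω), G t i j ω = 0 ∨ G t i j ω = 1)
    (hG_cond : ∀ t, t < 2 * T → ∀ i j : Fin n, i ≠ j →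
      μ[G t i j | sigmaAlgebraOf u] =ᵐ[μ] fun ω => w (u i ω) (u j ω))
    (hG_condIndep : iCondIndepFun (sigmaAlgebraOf u)
      ((measurable_pi_iff.mpr hu_meas).comap_le)
      (fun q : {q : ℕ × Fin n × Fin n // q.1 < 2 * T ∧ q.2.1 ≠ q.2.2} =>
        G q.1.1 q.1.2.1 q.1.2.2) μ)
    (i j k : Fin n) (hij : i ≠ j) (hik : i ≠ k) (hjk : j ≠ k) :
    CondIndepFun (sigmaAlgebraOf u) ((measurable_pi_iff.mpr hu_meas).comap_le)
        (rhat T G i j k) (chat T G i j k) μ ∧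
      (condVar (sigmaAlgebraOf u) μ
            (fun ω => (1 / 2) * (rhat T G i j k ω + chat T G i j k ω))
          =ᵐ[μ] fun ω => (1 / 4) * (condVar (sigmaAlgebraOf u) μ (rhat T G i j k) ω
            + condVar (sigmaAlgebraOf u) μ (chat T G i j k) ω)) ∧
      (∀ᵐ ω ∂μ, condVar (sigmaAlgebraOf u) μ
          (fun ω' => (1 / 2) * (rhat T G i j k ω' + chat T G i j k ω')) ω ≤ 1 / (T : ℝ)) := by
  classical
  have hm' : sigmaAlgebraOf u ≤ m0 := (measurable_pi_iff.mpr hu_meas).comap_le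
  have hT1 : (1 : ℝ) ≤ (T : ℝ) := by exact_mod_cast hT
  have hT0 : (0 : ℝ) < (T : ℝ) := lt_of_lt_of_le one_pos hT1
  -- measurability of w-composites w.r.t. m'
  have hwm : ∀ a b : Fin n, Measurable[sigmaAlgebraOf u] fun ω => w (u a ω) (u b ω) := by
    intro a b
    have hU : Measurable[sigmaAlgebraOf u] fun ω (x : Fin n) => u x ω := Measurable.of_comap_le le_rfl
    exact (hw_meas.comp ((measurable_pi_apply a).prodMk (measurable_pi_apply b))).comp hU
  -- basic bounds on G
  have hG0 : ∀ t (a b : Fin n) (ω : Ω), 0 ≤ G t a b ω := by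
    intro t a b ω; rcases hG01 t a b ω with h | h <;> rw [h] <;> norm_num
  have hG1 : ∀ t (a b : Fin n) (ω : Ω), G t a b ω ≤ 1 := by
    intro t a b ω; rcases hG01 t a b ω with h | h <;> rw [h] <;> norm_num
  have hsum0 : ∀ (s : Finset ℕ) (a b : Fin n) (ω : Ω), 0 ≤ ∑ t ∈ s, G t a b ω :=
    fun s a b ω => Finset.sum_nonneg fun t _ => hG0 t a b ω
  have hsum1 : ∀ (s : Finset ℕ) (a b : Fin n) (ω : Ω), ∑ t ∈ s, G t a b ω ≤ s.card := by
    intro s a b ω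
    calc ∑ t ∈ s, G t a b ω ≤ ∑ t ∈ s, 1 := Finset.sum_le_sum fun t _ => hG1 t a b ω
      _ = s.card := by simp
  have hsum_meas : ∀ (s : Finset ℕ) (a b : Fin n), Measurable fun ω => ∑ t ∈ s, G t a b ω :=
    fun s a b => Finset.measurable_sum s fun t _ => hG_meas t a b
  -- the family F
  set F : EdgeIdx n T → Ω → ℝ := fun q => G q.1.1 q.1.2.1 q.1.2.2 with hFdef
  have hFmeas : ∀ q : EdgeIdx n T, Measurable (F q) := fun q => hG_meas _ _ _
  -- product moments for distinct indices
  have PM : ∀ q1 q2 : EdgeIdx n T, q1 ≠ q2 →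
      μ[fun ω => F q1 ω * F q2 ω|sigmaAlgebraOf u] =ᵐ[μ]
        fun ω => w (u q1.1.2.1 ω) (u q1.1.2.2 ω) * w (u q2.1.2.1 ω) (u q2.1.2.2 ω) := by
    intro q1 q2 hne
    have hci : CondIndepFun (sigmaAlgebraOf u) hm' (F q1) (F q2) μ := hG_condIndep.condIndepFun hne
    have hmul := aux_condexp_mul hm' (hFmeas q1) (hFmeas q2) (CX := 1) (CY := 1)
      (fun ω => abs_le.2 ⟨by linarith [hG0 q1.1.1 q1.1.2.1 q1.1.2.2 ω],
        hG1 q1.1.1 q1.1.2.1 q1.1.2.2 ω⟩)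
      (fun ω => abs_le.2 ⟨by linarith [hG0 q2.1.1 q2.1.2.1 q2.1.2.2 ω],
        hG1 q2.1.1 q2.1.2.1 q2.1.2.2 ω⟩) hci
    have e1 := hG_cond q1.1.1 q1.2.1 q1.1.2.1 q1.1.2.2 q1.2.2
    have e2 := hG_cond q2.1.1 q2.2.1 q2.1.2.1 q2.1.2.2 q2.2.2
    filter_upwards [hmul, e1, e2] with ω h h1 h2
    rw [h, h1, h2]
  -- conditional expectation of a product of two sums
  have hIntG : ∀ (t₁ t₂ : ℕ) (a₁ b₁ a₂ b₂ : Fin n),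
      Integrable (fun ω => G t₁ a₁ b₁ ω * G t₂ a₂ b₂ ω) μ := by
    intro t₁ t₂ a₁ b₁ a₂ b₂
    refine aux_integrable_of_bound ((hG_meas t₁ a₁ b₁).mul (hG_meas t₂ a₂ b₂)) 1 fun ω => ?_
    rw [abs_mul]
    exact mul_le_one₀ (abs_le.2 ⟨by linarith [hG0 t₁ a₁ b₁ ω], hG1 t₁ a₁ b₁ ω⟩)
      (abs_nonneg _) (abs_le.2 ⟨by linarith [hG0 t₂ a₂ b₂ ω], hG1 t₂ a₂ b₂ ω⟩)
  have hpair : ∀ (s₁ s₂ : Finset ℕ), (∀ t ∈ s₁, t < 2 * T) → (∀ t ∈ s₂, t < 2 * T) →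
      ∀ (a₁ b₁ a₂ b₂ : Fin n), a₁ ≠ b₁ → a₂ ≠ b₂ → ∀ t₁ ∈ s₁, ∀ t₂ ∈ s₂,
      μ[fun ω => G t₁ a₁ b₁ ω * G t₂ a₂ b₂ ω|sigmaAlgebraOf u] =ᵐ[μ]
        fun ω => if (t₁, a₁, b₁) = (t₂, a₂, b₂) then w (u a₁ ω) (u b₁ ω)
          else w (u a₁ ω) (u b₁ ω) * w (u a₂ ω) (u b₂ ω) := by
    intro s₁ s₂ h₁ h₂ a₁ b₁ a₂ b₂ hab₁ hab₂ t₁ ht₁ t₂ ht₂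
    by_cases hqe : (t₁, a₁, b₁) = (t₂, a₂, b₂)
    · obtain ⟨h1, h2, h3⟩ : t₁ = t₂ ∧ a₁ = a₂ ∧ b₁ = b₂ := by
        simpa [Prod.ext_iff] using hqe
      subst h1; subst h2; subst h3
      have hGG : (fun ω => G t₁ a₁ b₁ ω * G t₁ a₁ b₁ ω) = G t₁ a₁ b₁ := by
        funext ω; rcases hG01 t₁ a₁ b₁ ω with h | h <;> rw [h] <;> ring
      rw [hGG]
      simp only [if_pos rfl]
      exact hG_cond t₁ (h₁ t₁ ht₁) a₁ b₁ hab₁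
    · have hrw : (fun ω => if (t₁, a₁, b₁) = (t₂, a₂, b₂) then w (u a₁ ω) (u b₁ ω)
          else w (u a₁ ω) (u b₁ ω) * w (u a₂ ω) (u b₂ ω))
          = fun ω => w (u a₁ ω) (u b₁ ω) * w (u a₂ ω) (u b₂ ω) := by
        funext ω; rw [if_neg hqe]
      rw [hrw]
      exact PM ⟨(t₁, a₁, b₁), ⟨h₁ t₁ ht₁, hab₁⟩⟩ ⟨(t₂, a₂, b₂), ⟨h₂ t₂ ht₂, hab₂⟩⟩
        (fun hEq => hqe (congrArg Subtype.val hEq))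
  have hmain : ∀ (s₁ s₂ : Finset ℕ), (∀ t ∈ s₁, t < 2 * T) → (∀ t ∈ s₂, t < 2 * T) →
      ∀ (a₁ b₁ a₂ b₂ : Fin n), a₁ ≠ b₁ → a₂ ≠ b₂ →
      μ[fun ω => (∑ t ∈ s₁, G t a₁ b₁ ω) * (∑ t ∈ s₂, G t a₂ b₂ ω)|sigmaAlgebraOf u] =ᵐ[μ]
        fun ω => ∑ t₁ ∈ s₁, ∑ t₂ ∈ s₂,
          (if (t₁, a₁, b₁) = (t₂, a₂, b₂) then w (u a₁ ω) (u b₁ ω)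
            else w (u a₁ ω) (u b₁ ω) * w (u a₂ ω) (u b₂ ω)) := by
    intro s₁ s₂ h₁ h₂ a₁ b₁ a₂ b₂ hab₁ hab₂
    have hterm : ∀ t₁ ∈ s₁,
        μ[fun ω => ∑ t₂ ∈ s₂, G t₁ a₁ b₁ ω * G t₂ a₂ b₂ ω|sigmaAlgebraOf u] =ᵐ[μ]
          fun ω => ∑ t₂ ∈ s₂, (if (t₁, a₁, b₁) = (t₂, a₂, b₂) then w (u a₁ ω) (u b₁ ω)
            else w (u a₁ ω) (u b₁ ω) * w (u a₂ ω) (u b₂ ω)) := by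
      intro t₁ ht₁
      have hconv : (fun ω => ∑ t₂ ∈ s₂, G t₁ a₁ b₁ ω * G t₂ a₂ b₂ ω)
          = ∑ t₂ ∈ s₂, fun ω => G t₁ a₁ b₁ ω * G t₂ a₂ b₂ ω := by
        funext ω; rw [Finset.sum_apply]
      rw [hconv]
      refine (condExp_finset_sum (fun t₂ _ => hIntG t₁ t₂ a₁ b₁ a₂ b₂) _).trans ?_
      have hall : ∀ᵐ ω ∂μ, ∀ t₂ ∈ s₂,
          (μ[fun ω' => G t₁ a₁ b₁ ω' * G t₂ a₂ b₂ ω'|sigmaAlgebraOf u]) ω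
            = (if (t₁, a₁, b₁) = (t₂, a₂, b₂) then w (u a₁ ω) (u b₁ ω)
              else w (u a₁ ω) (u b₁ ω) * w (u a₂ ω) (u b₂ ω)) := by
        rw [Filter.eventually_all_finset]
        intro t₂ ht₂
        exact hpair s₁ s₂ h₁ h₂ a₁ b₁ a₂ b₂ hab₁ hab₂ t₁ ht₁ t₂ ht₂
      filter_upwards [hall] with ω h
      rw [Finset.sum_apply]
      exact Finset.sum_congr rfl fun t₂ ht₂ => h t₂ ht₂
    have hconv : (fun ω => (∑ t ∈ s₁, G t a₁ b₁ ω) * (∑ t ∈ s₂, G t a₂ b₂ ω))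
        = ∑ t₁ ∈ s₁, fun ω => ∑ t₂ ∈ s₂, G t₁ a₁ b₁ ω * G t₂ a₂ b₂ ω := by
      funext ω; rw [Finset.sum_apply, Finset.sum_mul_sum]
    rw [hconv]
    have hint : ∀ t₁ ∈ s₁, Integrable (fun ω => ∑ t₂ ∈ s₂, G t₁ a₁ b₁ ω * G t₂ a₂ b₂ ω) μ := by
      intro t₁ _
      refine aux_integrable_of_bound
        (Finset.measurable_sum s₂ fun t₂ _ => (hG_meas t₁ a₁ b₁).mul (hG_meas t₂ a₂ b₂))
        (s₂.card : ℝ) fun ω => ?_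
      calc |∑ t₂ ∈ s₂, G t₁ a₁ b₁ ω * G t₂ a₂ b₂ ω|
          ≤ ∑ t₂ ∈ s₂, |G t₁ a₁ b₁ ω * G t₂ a₂ b₂ ω| := Finset.abs_sum_le_sum_abs _ _
        _ ≤ ∑ t₂ ∈ s₂, 1 := Finset.sum_le_sum fun t₂ _ => by
            rw [abs_mul]
            exact mul_le_one₀ (abs_le.2 ⟨by linarith [hG0 t₁ a₁ b₁ ω], hG1 t₁ a₁ b₁ ω⟩)
              (abs_nonneg _) (abs_le.2 ⟨by linarith [hG0 t₂ a₂ b₂ ω], hG1 t₂ a₂ b₂ ω⟩)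
        _ = (s₂.card : ℝ) := by simp
    refine (condExp_finset_sum hint _).trans ?_
    have hall : ∀ᵐ ω ∂μ, ∀ t₁ ∈ s₁,
        (μ[fun ω' => ∑ t₂ ∈ s₂, G t₁ a₁ b₁ ω' * G t₂ a₂ b₂ ω'|sigmaAlgebraOf u]) ω
          = ∑ t₂ ∈ s₂, (if (t₁, a₁, b₁) = (t₂, a₂, b₂) then w (u a₁ ω) (u b₁ ω)
            else w (u a₁ ω) (u b₁ ω) * w (u a₂ ω) (u b₂ ω)) := by
      rw [Filter.eventually_all_finset]
      intro t₁ ht₁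
      exact hterm t₁ ht₁
    filter_upwards [hall] with ω h
    rw [Finset.sum_apply]
    exact Finset.sum_congr rfl fun t₁ ht₁ => h t₁ ht₁
  -- conditional independence of sums over distinct edges
  have hSumInd : ∀ (s₁ s₂ : Finset ℕ) (h₁ : ∀ t ∈ s₁, t < 2 * T) (h₂ : ∀ t ∈ s₂, t < 2 * T)
      (a₁ b₁ a₂ b₂ : Fin n) (hab₁ : a₁ ≠ b₁) (hab₂ : a₂ ≠ b₂) (hne : (a₁, b₁) ≠ (a₂, b₂)),
      CondIndepFun (sigmaAlgebraOf u) hm' (fun ω => ∑ t ∈ s₁, G t a₁ b₁ ω)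
        (fun ω => ∑ t ∈ s₂, G t a₂ b₂ ω) μ := by
    intro s₁ s₂ h₁ h₂ a₁ b₁ a₂ b₂ hab₁ hab₂ hne
    set S₁ : Finset (EdgeIdx n T) :=
      s₁.attach.image (fun t => ⟨(t.1, a₁, b₁), ⟨h₁ t.1 t.2, hab₁⟩⟩) with hS₁
    set S₂ : Finset (EdgeIdx n T) :=
      s₂.attach.image (fun t => ⟨(t.1, a₂, b₂), ⟨h₂ t.1 t.2, hab₂⟩⟩) with hS₂
    have hdisj : Disjoint S₁ S₂ := by
      rw [Finset.disjoint_left]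
      rintro q hq hq'
      rw [hS₁, Finset.mem_image] at hq
      rw [hS₂, Finset.mem_image] at hq'
      obtain ⟨t, _, rfl⟩ := hq
      obtain ⟨t', _, hEq⟩ := hq'
      exact hne (congrArg (fun z : EdgeIdx n T => z.1.2) hEq).symm
    have base := hG_condIndep.condIndepFun_finset S₁ S₂ hdisj hFmeas
    have hφ : ∀ (S : Finset (EdgeIdx n T)),
        Measurable fun v : (∀ _ : {x // x ∈ S}, ℝ) => ∑ q, v q :=
      fun S => Finset.measurable_sum Finset.univ fun q _ => measurable_pi_apply q
    have hcomp := base.comp (hφ S₁) (hφ S₂)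
    have e : ∀ (s : Finset ℕ) (h : ∀ t ∈ s, t < 2 * T) (a b : Fin n) (hab : a ≠ b) (ω : Ω),
        (∑ q : {x // x ∈ s.attach.image
            (fun t : {x // x ∈ s} => (⟨(t.1, a, b), ⟨h t.1 t.2, hab⟩⟩ : EdgeIdx n T))},
          F q.1 ω) = ∑ t ∈ s, G t a b ω := by
      intro s h a b hab ω
      rw [Finset.univ_eq_attach]
      rw [Finset.sum_attach _ (fun q : EdgeIdx n T => F q ω)]
      rw [Finset.sum_image (fun x _ y _ hxy =>
        Subtype.ext (congrArg (fun z : EdgeIdx n T => z.1.1) hxy))]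
      exact Finset.sum_attach s (fun t => G t a b ω)
    have e₁ : ((fun v : (∀ _ : {x // x ∈ S₁}, ℝ) => ∑ q, v q)
        ∘ fun ω (q : {x // x ∈ S₁}) => F q.1 ω) = fun ω => ∑ t ∈ s₁, G t a₁ b₁ ω := by
      funext ω; exact e s₁ h₁ a₁ b₁ hab₁ ω
    have e₂ : ((fun v : (∀ _ : {x // x ∈ S₂}, ℝ) => ∑ q, v q)
        ∘ fun ω (q : {x // x ∈ S₂}) => F q.1 ω) = fun ω => ∑ t ∈ s₂, G t a₂ b₂ ω := by
      funext ω; exact e s₂ h₂ a₂ b₂ hab₂ ω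
    rw [← e₁, ← e₂]
    exact hcomp
  -- membership bound helpers
  have hr1 : ∀ t ∈ Finset.range T, t < 2 * T := fun t ht => by
    have := Finset.mem_range.1 ht; omega
  have hr2 : ∀ t ∈ Finset.Ico T (2 * T), t < 2 * T := fun t ht => (Finset.mem_Ico.1 ht).2
  -- the four blocks of indices
  set SA : Finset (EdgeIdx n T) :=
    (Finset.range T).attach.image (fun t => ⟨(t.1, i, k), ⟨hr1 t.1 t.2, hik⟩⟩) with hSA
  set SB : Finset (EdgeIdx n T) :=
    (Finset.Ico T (2 * T)).attach.image (fun t => ⟨(t.1, j, k), ⟨hr2 t.1 t.2, hjk⟩⟩) with hSB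
  set SC : Finset (EdgeIdx n T) :=
    (Finset.range T).attach.image (fun t => ⟨(t.1, k, i), ⟨hr1 t.1 t.2, Ne.symm hik⟩⟩) with hSC
  set SD : Finset (EdgeIdx n T) :=
    (Finset.Ico T (2 * T)).attach.image
      (fun t => ⟨(t.1, k, j), ⟨hr2 t.1 t.2, Ne.symm hjk⟩⟩) with hSD
  have himg : ∀ (s : Finset ℕ) (hs : ∀ t ∈ s, t < 2 * T) (a b : Fin n) (hab : a ≠ b)
      (g : EdgeIdx n T → ℝ),
      ∑ q ∈ s.attach.image (fun t : {x // x ∈ s} => (⟨(t.1, a, b),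
          ⟨hs t.1 t.2, hab⟩⟩ : EdgeIdx n T)), g q
        = ∑ t ∈ s.attach, g ⟨(t.1, a, b), ⟨hs t.1 t.2, hab⟩⟩ :=
    fun s hs a b hab g => Finset.sum_image (fun x _ y _ hxy =>
      Subtype.ext (congrArg (fun z : EdgeIdx n T => z.1.1) hxy))
  have hdisjAB : Disjoint SA SB := by
    rw [Finset.disjoint_left]
    rintro q hq hq'
    rw [hSA, Finset.mem_image] at hq
    rw [hSB, Finset.mem_image] at hq'
    obtain ⟨t, _, rfl⟩ := hq
    obtain ⟨t', _, hEq⟩ := hq'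
    exact hij (congrArg (fun z : EdgeIdx n T => z.1.2.1) hEq).symm
  have hdisjCD : Disjoint SC SD := by
    rw [Finset.disjoint_left]
    rintro q hq hq'
    rw [hSC, Finset.mem_image] at hq
    rw [hSD, Finset.mem_image] at hq'
    obtain ⟨t, _, rfl⟩ := hq
    obtain ⟨t', _, hEq⟩ := hq'
    exact hij (congrArg (fun z : EdgeIdx n T => z.1.2.2) hEq).symm
  have hdisjRC : Disjoint (SA ∪ SB) (SC ∪ SD) := by
    rw [Finset.disjoint_left]
    rintro q hq hq'
    rcases Finset.mem_union.1 hq with h | h <;> rcases Finset.mem_union.1 hq' with h' | h' <;>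
      [(rw [hSA, Finset.mem_image] at h; rw [hSC, Finset.mem_image] at h');
       (rw [hSA, Finset.mem_image] at h; rw [hSD, Finset.mem_image] at h');
       (rw [hSB, Finset.mem_image] at h; rw [hSC, Finset.mem_image] at h');
       (rw [hSB, Finset.mem_image] at h; rw [hSD, Finset.mem_image] at h')] <;>
      obtain ⟨t, _, rfl⟩ := h <;> obtain ⟨t', _, hEq⟩ := h'
    · exact hik (congrArg (fun z : EdgeIdx n T => z.1.2.1) hEq).symm
    · exact hik (congrArg (fun z : EdgeIdx n T => z.1.2.1) hEq).symm
    · exact hjk (congrArg (fun z : EdgeIdx n T => z.1.2.1) hEq).symm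
    · exact hjk (congrArg (fun z : EdgeIdx n T => z.1.2.1) hEq).symm
  -- independence of rhat and chat
  have hφr : Measurable fun v : (∀ _ : {x // x ∈ SA ∪ SB}, ℝ) =>
      1 / (T : ℝ) ^ 2 * (∑ q, if (q.1 : EdgeIdx n T).1.2.1 = i then v q else 0) *
        (∑ q, if (q.1 : EdgeIdx n T).1.2.1 = j then v q else 0) := by
    refine (measurable_const.mul ?_).mul ?_ <;>
      refine Finset.measurable_sum Finset.univ fun q _ => ?_ <;>
      [by_cases hc : (q.1 : EdgeIdx n T).1.2.1 = i; by_cases hc : (q.1 : EdgeIdx n T).1.2.1 = j] <;>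
      simp only [if_pos, hc, if_neg, if_false, if_true] <;>
      first
        | exact measurable_pi_apply q
        | exact measurable_const
  have hφc : Measurable fun v : (∀ _ : {x // x ∈ SC ∪ SD}, ℝ) =>
      1 / (T : ℝ) ^ 2 * (∑ q, if (q.1 : EdgeIdx n T).1.2.2 = i then v q else 0) *
        (∑ q, if (q.1 : EdgeIdx n T).1.2.2 = j then v q else 0) := by
    refine (measurable_const.mul ?_).mul ?_ <;>
      refine Finset.measurable_sum Finset.univ fun q _ => ?_ <;>
      [by_cases hc : (q.1 : EdgeIdx n T).1.2.2 = i; by_cases hc : (q.1 : EdgeIdx n T).1.2.2 = j] <;>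
      simp only [if_pos, hc, if_neg, if_false, if_true] <;>
      first
        | exact measurable_pi_apply q
        | exact measurable_const
  have er : ((fun v : (∀ _ : {x // x ∈ SA ∪ SB}, ℝ) =>
      1 / (T : ℝ) ^ 2 * (∑ q, if (q.1 : EdgeIdx n T).1.2.1 = i then v q else 0) *
        (∑ q, if (q.1 : EdgeIdx n T).1.2.1 = j then v q else 0))
      ∘ fun ω (q : {x // x ∈ SA ∪ SB}) => F q.1 ω) = rhat T G i j k := by
    funext ω
    simp only [Function.comp_apply, rhat]
    rw [Finset.univ_eq_attach,
      Finset.sum_attach _ (fun q : EdgeIdx n T => if q.1.2.1 = i then F q ω else 0),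
      Finset.sum_attach _ (fun q : EdgeIdx n T => if q.1.2.1 = j then F q ω else 0),
      Finset.sum_union hdisjAB, Finset.sum_union hdisjAB, hSA, hSB,
      himg _ hr1 i k hik, himg _ hr2 j k hjk, himg _ hr1 i k hik, himg _ hr2 j k hjk]
    have c1 : ∀ t ∈ (Finset.range T).attach,
        (if i = i then G t.1 i k ω else 0) = G t.1 i k ω := fun t _ => if_pos rfl
    have c2 : ∀ t ∈ (Finset.Ico T (2 * T)).attach,
        (if j = i then G t.1 j k ω else 0) = 0 := fun t _ => if_neg (Ne.symm hij)
    have c3 : ∀ t ∈ (Finset.range T).attach,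
        (if i = j then G t.1 i k ω else 0) = 0 := fun t _ => if_neg hij
    have c4 : ∀ t ∈ (Finset.Ico T (2 * T)).attach,
        (if j = j then G t.1 j k ω else 0) = G t.1 j k ω := fun t _ => if_pos rfl
    rw [Finset.sum_congr rfl c1, Finset.sum_congr rfl c2, Finset.sum_congr rfl c3,
      Finset.sum_congr rfl c4, Finset.sum_const_zero, Finset.sum_const_zero,
      Finset.sum_attach _ (fun t => G t i k ω), Finset.sum_attach _ (fun t => G t j k ω),
      add_zero, zero_add]
  have ec : ((fun v : (∀ _ : {x // x ∈ SC ∪ SD}, ℝ) =>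
      1 / (T : ℝ) ^ 2 * (∑ q, if (q.1 : EdgeIdx n T).1.2.2 = i then v q else 0) *
        (∑ q, if (q.1 : EdgeIdx n T).1.2.2 = j then v q else 0))
      ∘ fun ω (q : {x // x ∈ SC ∪ SD}) => F q.1 ω) = chat T G i j k := by
    funext ω
    simp only [Function.comp_apply, chat]
    rw [Finset.univ_eq_attach,
      Finset.sum_attach _ (fun q : EdgeIdx n T => if q.1.2.2 = i then F q ω else 0),
      Finset.sum_attach _ (fun q : EdgeIdx n T => if q.1.2.2 = j then F q ω else 0),
      Finset.sum_union hdisjCD, Finset.sum_union hdisjCD, hSC, hSD,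
      himg _ hr1 k i (Ne.symm hik), himg _ hr2 k j (Ne.symm hjk),
      himg _ hr1 k i (Ne.symm hik), himg _ hr2 k j (Ne.symm hjk)]
    have c1 : ∀ t ∈ (Finset.range T).attach,
        (if i = i then G t.1 k i ω else 0) = G t.1 k i ω := fun t _ => if_pos rfl
    have c2 : ∀ t ∈ (Finset.Ico T (2 * T)).attach,
        (if j = i then G t.1 k j ω else 0) = 0 := fun t _ => if_neg (Ne.symm hij)
    have c3 : ∀ t ∈ (Finset.range T).attach,
        (if i = j then G t.1 k i ω else 0) = 0 := fun t _ => if_neg hij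
    have c4 : ∀ t ∈ (Finset.Ico T (2 * T)).attach,
        (if j = j then G t.1 k j ω else 0) = G t.1 k j ω := fun t _ => if_pos rfl
    rw [Finset.sum_congr rfl c1, Finset.sum_congr rfl c2, Finset.sum_congr rfl c3,
      Finset.sum_congr rfl c4, Finset.sum_const_zero, Finset.sum_const_zero,
      Finset.sum_attach _ (fun t => G t k i ω), Finset.sum_attach _ (fun t => G t k j ω),
      add_zero, zero_add]
  have hrc_ind : CondIndepFun (sigmaAlgebraOf u) hm' (rhat T G i j k) (chat T G i j k) μ := by
    rw [← er, ← ec]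
    exact (hG_condIndep.condIndepFun_finset (SA ∪ SB) (SC ∪ SD) hdisjRC hFmeas).comp hφr hφc
  have hTne : (T : ℝ) ≠ 0 := ne_of_gt hT0
  have hcard2 : (Finset.Ico T (2 * T)).card = T := by rw [Nat.card_Ico]; omega
  set p : Ω → ℝ := fun ω => w (u i ω) (u k ω) with hpdef
  set q : Ω → ℝ := fun ω => w (u j ω) (u k ω) with hqdef
  set p' : Ω → ℝ := fun ω => w (u k ω) (u i ω) with hp'def
  set q' : Ω → ℝ := fun ω => w (u k ω) (u j ω) with hq'def
  set A : Ω → ℝ := fun ω => ∑ t ∈ Finset.range T, G t i k ω with hAdef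
  set B : Ω → ℝ := fun ω => ∑ t ∈ Finset.Ico T (2 * T), G t j k ω with hBdef
  set A' : Ω → ℝ := fun ω => ∑ t ∈ Finset.range T, G t k i ω with hA'def
  set B' : Ω → ℝ := fun ω => ∑ t ∈ Finset.Ico T (2 * T), G t k j ω with hB'def
  -- rectangular (off-diagonal) evaluations
  have EAB : μ[fun ω => A ω * B ω|sigmaAlgebraOf u] =ᵐ[μ]
      fun ω => (T : ℝ) ^ 2 * (p ω * q ω) := by
    refine (hmain (Finset.range T) (Finset.Ico T (2 * T)) hr1 hr2 i k j k hik hjk).trans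
      (Filter.EventuallyEq.of_eq ?_)
    funext ω
    simp only [Prod.mk.injEq, hij, false_and, and_false, if_false, Finset.sum_const,
      Finset.card_range, hcard2, nsmul_eq_mul]
    ring
  have EA'B' : μ[fun ω => A' ω * B' ω|sigmaAlgebraOf u] =ᵐ[μ]
      fun ω => (T : ℝ) ^ 2 * (p' ω * q' ω) := by
    refine (hmain (Finset.range T) (Finset.Ico T (2 * T)) hr1 hr2 k i k j (Ne.symm hik)
      (Ne.symm hjk)).trans (Filter.EventuallyEq.of_eq ?_)
    funext ω
    simp only [Prod.mk.injEq, hij, false_and, and_false, if_false, Finset.sum_const,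
      Finset.card_range, hcard2, nsmul_eq_mul]
    ring
  -- diagonal evaluations
  have EAA : μ[fun ω => A ω * A ω|sigmaAlgebraOf u] =ᵐ[μ]
      fun ω => (T : ℝ) * p ω + ((T : ℝ) ^ 2 - T) * p ω ^ 2 := by
    refine (hmain (Finset.range T) (Finset.range T) hr1 hr1 i k i k hik hik).trans
      (Filter.EventuallyEq.of_eq ?_)
    funext ω
    have hcond : ∀ t₁ t₂ : ℕ, ((t₁, i, k) = (t₂, i, k)) = (t₁ = t₂) := by
      intro t₁ t₂; simp
    simp only [hcond]
    rw [aux_diag_sum, Finset.card_range]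
    ring
  have EBB : μ[fun ω => B ω * B ω|sigmaAlgebraOf u] =ᵐ[μ]
      fun ω => (T : ℝ) * q ω + ((T : ℝ) ^ 2 - T) * q ω ^ 2 := by
    refine (hmain (Finset.Ico T (2 * T)) (Finset.Ico T (2 * T)) hr2 hr2 j k j k hjk hjk).trans
      (Filter.EventuallyEq.of_eq ?_)
    funext ω
    have hcond : ∀ t₁ t₂ : ℕ, ((t₁, j, k) = (t₂, j, k)) = (t₁ = t₂) := by
      intro t₁ t₂; simp
    simp only [hcond]
    rw [aux_diag_sum, hcard2]
    ring
  have EA'A' : μ[fun ω => A' ω * A' ω|sigmaAlgebraOf u] =ᵐ[μ]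
      fun ω => (T : ℝ) * p' ω + ((T : ℝ) ^ 2 - T) * p' ω ^ 2 := by
    refine (hmain (Finset.range T) (Finset.range T) hr1 hr1 k i k i (Ne.symm hik)
      (Ne.symm hik)).trans (Filter.EventuallyEq.of_eq ?_)
    funext ω
    have hcond : ∀ t₁ t₂ : ℕ, ((t₁, k, i) = (t₂, k, i)) = (t₁ = t₂) := by
      intro t₁ t₂; simp
    simp only [hcond]
    rw [aux_diag_sum, Finset.card_range]
    ring
  have EB'B' : μ[fun ω => B' ω * B' ω|sigmaAlgebraOf u] =ᵐ[μ]
      fun ω => (T : ℝ) * q' ω + ((T : ℝ) ^ 2 - T) * q' ω ^ 2 := by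
    refine (hmain (Finset.Ico T (2 * T)) (Finset.Ico T (2 * T)) hr2 hr2 k j k j (Ne.symm hjk)
      (Ne.symm hjk)).trans (Filter.EventuallyEq.of_eq ?_)
    funext ω
    have hcond : ∀ t₁ t₂ : ℕ, ((t₁, k, j) = (t₂, k, j)) = (t₁ = t₂) := by
      intro t₁ t₂; simp
    simp only [hcond]
    rw [aux_diag_sum, hcard2]
    ring
  -- bounds on the sums
  have hA0 : ∀ ω, 0 ≤ A ω := fun ω => hsum0 _ i k ω
  have hB0 : ∀ ω, 0 ≤ B ω := fun ω => hsum0 _ j k ω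
  have hA'0 : ∀ ω, 0 ≤ A' ω := fun ω => hsum0 _ k i ω
  have hB'0 : ∀ ω, 0 ≤ B' ω := fun ω => hsum0 _ k j ω
  have hAub : ∀ ω, A ω ≤ (T : ℝ) := fun ω => by
    have := hsum1 (Finset.range T) i k ω; simpa [Finset.card_range] using this
  have hBub : ∀ ω, B ω ≤ (T : ℝ) := fun ω => by
    have := hsum1 (Finset.Ico T (2 * T)) j k ω; simpa [hcard2] using this
  have hA'ub : ∀ ω, A' ω ≤ (T : ℝ) := fun ω => by
    have := hsum1 (Finset.range T) k i ω; simpa [Finset.card_range] using this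
  have hB'ub : ∀ ω, B' ω ≤ (T : ℝ) := fun ω => by
    have := hsum1 (Finset.Ico T (2 * T)) k j ω; simpa [hcard2] using this
  -- conditional independence of the squares
  have hABind : CondIndepFun (sigmaAlgebraOf u) hm' A B μ :=
    hSumInd (Finset.range T) (Finset.Ico T (2 * T)) hr1 hr2 i k j k hik hjk
      (fun h => hij (congrArg Prod.fst h))
  have hA'B'ind : CondIndepFun (sigmaAlgebraOf u) hm' A' B' μ :=
    hSumInd (Finset.range T) (Finset.Ico T (2 * T)) hr1 hr2 k i k j (Ne.symm hik) (Ne.symm hjk)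
      (fun h => hij (congrArg Prod.snd h))
  have hsq : Measurable fun x : ℝ => x * x := measurable_id.mul measurable_id
  -- conditional expectations of products of squares
  have EAABB : μ[fun ω => (A ω * A ω) * (B ω * B ω)|sigmaAlgebraOf u] =ᵐ[μ]
      fun ω => (μ[fun ω' => A ω' * A ω'|sigmaAlgebraOf u]) ω
        * (μ[fun ω' => B ω' * B ω'|sigmaAlgebraOf u]) ω := by
    refine aux_condexp_mul hm' ((hsum_meas _ i k).mul (hsum_meas _ i k))
      ((hsum_meas _ j k).mul (hsum_meas _ j k))
      (CX := (T : ℝ) * T) (CY := (T : ℝ) * T) (fun ω => ?_) (fun ω => ?_)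
      (hABind.comp hsq hsq)
    · rw [abs_mul]
      exact mul_le_mul (abs_le.2 ⟨by linarith [hA0 ω], hAub ω⟩)
        (abs_le.2 ⟨by linarith [hA0 ω], hAub ω⟩) (abs_nonneg _) hT0.le
    · rw [abs_mul]
      exact mul_le_mul (abs_le.2 ⟨by linarith [hB0 ω], hBub ω⟩)
        (abs_le.2 ⟨by linarith [hB0 ω], hBub ω⟩) (abs_nonneg _) hT0.le
  have EAABB' : μ[fun ω => (A' ω * A' ω) * (B' ω * B' ω)|sigmaAlgebraOf u] =ᵐ[μ]
      fun ω => (μ[fun ω' => A' ω' * A' ω'|sigmaAlgebraOf u]) ω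
        * (μ[fun ω' => B' ω' * B' ω'|sigmaAlgebraOf u]) ω := by
    refine aux_condexp_mul hm' ((hsum_meas _ k i).mul (hsum_meas _ k i))
      ((hsum_meas _ k j).mul (hsum_meas _ k j))
      (CX := (T : ℝ) * T) (CY := (T : ℝ) * T) (fun ω => ?_) (fun ω => ?_)
      (hA'B'ind.comp hsq hsq)
    · rw [abs_mul]
      exact mul_le_mul (abs_le.2 ⟨by linarith [hA'0 ω], hA'ub ω⟩)
        (abs_le.2 ⟨by linarith [hA'0 ω], hA'ub ω⟩) (abs_nonneg _) hT0.le
    · rw [abs_mul]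
      exact mul_le_mul (abs_le.2 ⟨by linarith [hB'0 ω], hB'ub ω⟩)
        (abs_le.2 ⟨by linarith [hB'0 ω], hB'ub ω⟩) (abs_nonneg _) hT0.le
  -- rhat and chat as scalar multiples
  have hrfun : rhat T G i j k = (1 / (T : ℝ) ^ 2) • fun ω => A ω * B ω := by
    funext ω
    simp only [rhat, Pi.smul_apply, smul_eq_mul, hAdef, hBdef]
    ring
  have hcfun : chat T G i j k = (1 / (T : ℝ) ^ 2) • fun ω => A' ω * B' ω := by
    funext ω
    simp only [chat, Pi.smul_apply, smul_eq_mul, hA'def, hB'def]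
    ring
  have hr2fun : (fun ω => rhat T G i j k ω ^ 2)
      = (1 / (T : ℝ) ^ 4) • fun ω => (A ω * A ω) * (B ω * B ω) := by
    funext ω
    simp only [rhat, Pi.smul_apply, smul_eq_mul, hAdef, hBdef]
    ring
  have hc2fun : (fun ω => chat T G i j k ω ^ 2)
      = (1 / (T : ℝ) ^ 4) • fun ω => (A' ω * A' ω) * (B' ω * B' ω) := by
    funext ω
    simp only [chat, Pi.smul_apply, smul_eq_mul, hA'def, hB'def]
    ring
  -- measurability and bounds for rhat, chat
  have hrmeas : Measurable (rhat T G i j k) := by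
    rw [hrfun]
    exact (measurable_const.mul ((hsum_meas _ i k).mul (hsum_meas _ j k))).comp measurable_id
  have hcmeas : Measurable (chat T G i j k) := by
    rw [hcfun]
    exact (measurable_const.mul ((hsum_meas _ k i).mul (hsum_meas _ k j))).comp measurable_id
  have hrb : ∀ ω, |rhat T G i j k ω| ≤ 1 := by
    intro ω
    rw [hrfun]
    simp only [Pi.smul_apply, smul_eq_mul]
    rw [abs_le]
    constructor
    · have := mul_nonneg (mul_nonneg (by positivity : (0:ℝ) ≤ 1 / (T : ℝ) ^ 2) (hA0 ω)) (hB0 ω)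
      nlinarith
    · have h := mul_le_mul (hAub ω) (hBub ω) (hB0 ω) hT0.le
      calc 1 / (T : ℝ) ^ 2 * (A ω * B ω) = (A ω * B ω) / (T : ℝ) ^ 2 := by ring
        _ ≤ ((T : ℝ) * T) / (T : ℝ) ^ 2 := by gcongr
        _ = 1 := by rw [pow_two, div_self (mul_ne_zero hTne hTne)]
  have hcb : ∀ ω, |chat T G i j k ω| ≤ 1 := by
    intro ω
    rw [hcfun]
    simp only [Pi.smul_apply, smul_eq_mul]
    rw [abs_le]
    constructor
    · have := mul_nonneg (mul_nonneg (by positivity : (0:ℝ) ≤ 1 / (T : ℝ) ^ 2) (hA'0 ω)) (hB'0 ω)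
      nlinarith
    · have h := mul_le_mul (hA'ub ω) (hB'ub ω) (hB'0 ω) hT0.le
      calc 1 / (T : ℝ) ^ 2 * (A' ω * B' ω) = (A' ω * B' ω) / (T : ℝ) ^ 2 := by ring
        _ ≤ ((T : ℝ) * T) / (T : ℝ) ^ 2 := by gcongr
        _ = 1 := by rw [pow_two, div_self (mul_ne_zero hTne hTne)]
  have hri : Integrable (rhat T G i j k) μ := aux_integrable_of_bound hrmeas 1 hrb
  have hci : Integrable (chat T G i j k) μ := aux_integrable_of_bound hcmeas 1 hcb
  have hr2i : Integrable (fun ω => rhat T G i j k ω ^ 2) μ := by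
    refine aux_integrable_of_bound (hrmeas.pow_const 2) 1 fun ω => ?_
    rw [abs_pow]
    exact pow_le_one₀ (abs_nonneg _) (hrb ω)
  have hc2i : Integrable (fun ω => chat T G i j k ω ^ 2) μ := by
    refine aux_integrable_of_bound (hcmeas.pow_const 2) 1 fun ω => ?_
    rw [abs_pow]
    exact pow_le_one₀ (abs_nonneg _) (hcb ω)
  have hrci : Integrable (fun ω => rhat T G i j k ω * chat T G i j k ω) μ := by
    refine aux_integrable_of_bound (hrmeas.mul hcmeas) 1 fun ω => ?_
    rw [abs_mul]
    exact mul_le_one₀ (hrb ω) (abs_nonneg _) (hcb ω)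
  -- first conditional moments
  have Er : μ[rhat T G i j k|sigmaAlgebraOf u] =ᵐ[μ] fun ω => p ω * q ω := by
    rw [hrfun]
    refine (condExp_smul _ _ _).trans ?_
    filter_upwards [EAB] with ω h
    simp only [Pi.smul_apply, smul_eq_mul]
    rw [h]
    field_simp
  have Ec : μ[chat T G i j k|sigmaAlgebraOf u] =ᵐ[μ] fun ω => p' ω * q' ω := by
    rw [hcfun]
    refine (condExp_smul _ _ _).trans ?_
    filter_upwards [EA'B'] with ω h
    simp only [Pi.smul_apply, smul_eq_mul]
    rw [h]
    field_simp
  -- second conditional moments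
  have Er2 : μ[fun ω => rhat T G i j k ω ^ 2|sigmaAlgebraOf u] =ᵐ[μ]
      fun ω => 1 / (T : ℝ) ^ 4 * (((T : ℝ) * p ω + ((T : ℝ) ^ 2 - T) * p ω ^ 2)
        * ((T : ℝ) * q ω + ((T : ℝ) ^ 2 - T) * q ω ^ 2)) := by
    rw [hr2fun]
    refine (condExp_smul _ _ _).trans ?_
    filter_upwards [EAABB, EAA, EBB] with ω h1 h2 h3
    simp only [Pi.smul_apply, smul_eq_mul]
    rw [h1, h2, h3]
  have Ec2 : μ[fun ω => chat T G i j k ω ^ 2|sigmaAlgebraOf u] =ᵐ[μ]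
      fun ω => 1 / (T : ℝ) ^ 4 * (((T : ℝ) * p' ω + ((T : ℝ) ^ 2 - T) * p' ω ^ 2)
        * ((T : ℝ) * q' ω + ((T : ℝ) ^ 2 - T) * q' ω ^ 2)) := by
    rw [hc2fun]
    refine (condExp_smul _ _ _).trans ?_
    filter_upwards [EAABB', EA'A', EB'B'] with ω h1 h2 h3
    simp only [Pi.smul_apply, smul_eq_mul]
    rw [h1, h2, h3]
  -- product moment of rhat and chat
  have Erc : μ[fun ω => rhat T G i j k ω * chat T G i j k ω|sigmaAlgebraOf u] =ᵐ[μ]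
      fun ω => (μ[rhat T G i j k|sigmaAlgebraOf u]) ω * (μ[chat T G i j k|sigmaAlgebraOf u]) ω :=
    aux_condexp_mul hm' hrmeas hcmeas (CX := 1) (CY := 1) hrb hcb hrc_ind
  -- conditional mean and second moment of the average
  have hsmeas : Measurable fun ω => (1 / 2 : ℝ) * (rhat T G i j k ω + chat T G i j k ω) :=
    measurable_const.mul (hrmeas.add hcmeas)
  have hsb : ∀ ω, |(1 / 2 : ℝ) * (rhat T G i j k ω + chat T G i j k ω)| ≤ 1 := by
    intro ω
    rw [abs_mul, abs_of_nonneg (by norm_num : (0:ℝ) ≤ 1/2)]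
    have := (abs_add_le (rhat T G i j k ω) (chat T G i j k ω)).trans
      (add_le_add (hrb ω) (hcb ω))
    linarith
  have Es : μ[fun ω => (1 / 2 : ℝ) * (rhat T G i j k ω + chat T G i j k ω)|sigmaAlgebraOf u]
      =ᵐ[μ] fun ω => (1 / 2 : ℝ) * ((μ[rhat T G i j k|sigmaAlgebraOf u]) ω
        + (μ[chat T G i j k|sigmaAlgebraOf u]) ω) := by
    have h0 : (fun ω => (1 / 2 : ℝ) * (rhat T G i j k ω + chat T G i j k ω))
        = (1 / 2 : ℝ) • (rhat T G i j k + chat T G i j k) := by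
      funext ω; simp [smul_eq_mul]
    rw [h0]
    refine (condExp_smul _ _ _).trans ?_
    filter_upwards [condExp_add hri hci _] with ω h
    simp only [Pi.smul_apply, smul_eq_mul, Pi.add_apply] at h ⊢
    rw [h]
  have Es2 : μ[(fun ω => ((1 / 2 : ℝ) * (rhat T G i j k ω + chat T G i j k ω)) ^ 2)|sigmaAlgebraOf u] =ᵐ[μ]
      fun ω => (1 / 4 : ℝ) * (((μ[fun ω' => rhat T G i j k ω' ^ 2|sigmaAlgebraOf u]) ω
        + (μ[fun ω' => chat T G i j k ω' ^ 2|sigmaAlgebraOf u]) ω)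
        + 2 * ((μ[rhat T G i j k|sigmaAlgebraOf u]) ω
          * (μ[chat T G i j k|sigmaAlgebraOf u]) ω)) := by
    have h0 : (fun ω => ((1 / 2 : ℝ) * (rhat T G i j k ω + chat T G i j k ω)) ^ 2)
        = (1 / 4 : ℝ) • (((fun ω => rhat T G i j k ω ^ 2) + fun ω => chat T G i j k ω ^ 2)
          + (2 : ℝ) • fun ω => rhat T G i j k ω * chat T G i j k ω) := by
      funext ω
      simp only [Pi.smul_apply, Pi.add_apply, smul_eq_mul]
      ring
    rw [h0]
    refine (condExp_smul _ _ _).trans ?_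
    have e_a := condExp_add (μ := μ) (m := sigmaAlgebraOf u) (hr2i.add hc2i)
      (((hrci).smul (2 : ℝ)) : Integrable ((2:ℝ) • fun ω => rhat T G i j k ω * chat T G i j k ω) μ)
    have e_b := condExp_add (μ := μ) (m := sigmaAlgebraOf u) hr2i hc2i
    have e_c := condExp_smul (μ := μ) (m := sigmaAlgebraOf u) (m₀ := m0) (2 : ℝ)
      (fun ω => rhat T G i j k ω * chat T G i j k ω)
    filter_upwards [e_a, e_b, e_c, Erc] with ω h1 h2 h3 h4
    simp only [Pi.smul_apply, Pi.add_apply, smul_eq_mul] at h1 h2 h3 h4 ⊢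
    rw [h1, h2, h3, h4]
  -- conditional variances
  have Vr := aux_condVar_eq (μ := μ) hm' hrmeas hrb zero_le_one
  have Vc := aux_condVar_eq (μ := μ) hm' hcmeas hcb zero_le_one
  have Vs := aux_condVar_eq (μ := μ) hm' hsmeas hsb zero_le_one
  refine ⟨hrc_ind, ?_, ?_⟩
  · filter_upwards [Vs, Es, Es2, Vr, Vc] with ω h1 h2 h3 h4 h5
    rw [h1, h2, h3, h4, h5]
    ring
  · filter_upwards [Vs, Es, Es2, Vr, Vc, Er, Er2, Ec, Ec2] with ω h1 h2 h3 h4 h5 h6 h7 h8 h9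
    rw [h1, h2, h3, h6, h7, h8, h9]
    have b1 := aux_Vbound hT1 (hw01 (u i ω) (u k ω)).1 (hw01 (u i ω) (u k ω)).2
      (hw01 (u j ω) (u k ω)).1 (hw01 (u j ω) (u k ω)).2
    have b2 := aux_Vbound hT1 (hw01 (u k ω) (u i ω)).1 (hw01 (u k ω) (u i ω)).2
      (hw01 (u k ω) (u j ω)).1 (hw01 (u k ω) (u j ω)).2
    simp only [hpdef, hqdef, hp'def, hq'def]
    have h2T : (2 : ℝ) / (T : ℝ) = 2 * (1 / (T : ℝ)) := by ring
    rw [h2T] at b1 b2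
    linarith [b1, b2]
end

section
/- Let w be a piecewise Lipschitz graphon with constant L > 0, Lipschitz intervals I_1,…,I_Q, and δ = min_k |α_k − α_{k−1}| the width of the smallest Lipschitz interval. Fix u_i, u_j ∈ [0,1] and set f(x) = (w(x,u_i) − w(x,u_j))². If 0 < ε < 2δL and ∫₀¹ f(x) dx ≤ ε²/(8L), then sup_{x∈[0,1]} f(x) ≤ ε. -/
open MeasureTheory

/-- `w` is piecewise Lipschitz with constant `L` and `Q` blocks, with breakpoints
`0 = α 0 < α 1 < … < α Q = 1` and intervals `I_k = [α (k-1), α k]`. -/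
def PiecewiseLipschitz (w : ℝ → ℝ → ℝ) (L : ℝ) (Q : ℕ) (α : ℕ → ℝ) : Prop :=
  α 0 = 0 ∧ α Q = 1 ∧ (∀ k < Q, α k < α (k + 1)) ∧
    ∀ i < Q, ∀ j < Q, ∀ x₁ ∈ Set.Icc (α i) (α (i + 1)), ∀ x₂ ∈ Set.Icc (α i) (α (i + 1)),
      ∀ y₁ ∈ Set.Icc (α j) (α (j + 1)), ∀ y₂ ∈ Set.Icc (α j) (α (j + 1)),
        |w x₁ y₁ - w x₂ y₂| ≤ L * (|x₁ - x₂| + |y₁ - y₂|)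

/-- Monotonicity of the breakpoints. -/
lemma alpha_mono {Q : ℕ} {α : ℕ → ℝ} (h : ∀ k < Q, α k < α (k + 1)) :
    ∀ n ≤ Q, ∀ m ≤ n, α m ≤ α n := by
  intro n hn
  induction n with
  | zero => intro m hm; interval_cases m; exact le_rfl
  | succ p ih =>
    intro m hm
    rcases eq_or_lt_of_le hm with h' | h'
    · subst h'; exact le_rfl
    · exact (ih (by omega) m (by omega)).trans (h p (by omega)).le

/-- Every point of `[0,1]` lies in some block. -/
lemma exists_block {α : ℕ → ℝ} (h0 : α 0 = 0) {x : ℝ} (hx0 : 0 ≤ x) :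
    ∀ n, 0 < n → x ≤ α n → ∃ i < n, x ∈ Set.Icc (α i) (α (i + 1)) := by
  intro n
  induction n with
  | zero => intro h; omega
  | succ p ih =>
    intro _ hxn
    by_cases h : α p ≤ x
    · exact ⟨p, Nat.lt_succ_self p, h, hxn⟩
    · have hp : 0 < p := by
        rcases Nat.eq_zero_or_pos p with rfl | hp
        · rw [h0] at h; exact absurd hx0 h
        · exact hp
      obtain ⟨i, hi, hmem⟩ := ih hp (le_of_not_ge h)
      exact ⟨i, hi.trans (Nat.lt_succ_self p), hmem⟩

lemma integral_linear (A B c d : ℝ) :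
    (∫ t in c..d, (A + B * t)) = A * (d - c) + B * (d ^ 2 - c ^ 2) / 2 := by
  have hB : IntervalIntegrable (fun t : ℝ => B * t) volume c d :=
    Continuous.intervalIntegrable (continuous_const.mul continuous_id') c d
  rw [intervalIntegral.integral_add intervalIntegrable_const hB,
    intervalIntegral.integral_const_mul, integral_id, intervalIntegral.integral_const]
  simp only [smul_eq_mul]
  ring

set_option maxHeartbeats 1000000 in
theorem sup_slice_sq_le_of_integral_le
    (w : ℝ → ℝ → ℝ) (hw_meas : Measurable fun p : ℝ × ℝ => w p.1 p.2)
    (hw01 : ∀ x y, w x y ∈ Set.Icc (0:ℝ) 1)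
    (L : ℝ) (hL : 0 < L) (Q : ℕ) (hQ : 0 < Q) (α : ℕ → ℝ)
    (hpl : PiecewiseLipschitz w L Q α)
    (ui uj : ℝ) (hui : ui ∈ Set.Icc (0:ℝ) 1) (huj : uj ∈ Set.Icc (0:ℝ) 1)
    (ε : ℝ) (hε : 0 < ε)
    (hεδ : ε < 2 * ((Finset.range Q).inf' (Finset.nonempty_range_iff.mpr hQ.ne')
      fun k => α (k + 1) - α k) * L)
    (hint : (∫ x in (0:ℝ)..1, (w x ui - w x uj) ^ 2) ≤ ε ^ 2 / (8 * L)) :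
    ∀ x ∈ Set.Icc (0:ℝ) 1, (w x ui - w x uj) ^ 2 ≤ ε := by
  obtain ⟨h0, h1, hinc, hlip⟩ := hpl
  set f : ℝ → ℝ := fun x => (w x ui - w x uj) ^ 2 with hf_def
  set δ : ℝ := (Finset.range Q).inf' (Finset.nonempty_range_iff.mpr hQ.ne')
      (fun k => α (k + 1) - α k) with hδ_def
  -- measurability of f
  have hmg : ∀ u : ℝ, Measurable fun x => w x u := fun u =>
    hw_meas.comp (measurable_id.prodMk measurable_const)
  have hf_meas : Measurable f := ((hmg ui).sub (hmg uj)).pow measurable_const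
  have hf_nonneg : ∀ x, 0 ≤ f x := fun x => sq_nonneg _
  have hf_le_one : ∀ x, f x ≤ 1 := by
    intro x
    have h1 := hw01 x ui
    have h2 := hw01 x uj
    simp only [Set.mem_Icc] at h1 h2
    simp only [hf_def]
    nlinarith [h1.1, h1.2, h2.1, h2.2]
  -- integrability of f on any interval inside ℝ
  have hf_int : ∀ c d : ℝ, IntervalIntegrable f volume c d := by
    intro c d
    rw [intervalIntegrable_iff]
    apply MeasureTheory.Integrable.mono' (g := fun _ => (1:ℝ))
      (integrableOn_const measure_Ioc_lt_top.ne)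
    · exact hf_meas.aestronglyMeasurable.restrict
    · filter_upwards with x
      rw [Real.norm_eq_abs, abs_of_nonneg (hf_nonneg x)]
      exact hf_le_one x
  intro x₀ hx₀
  by_contra hgt
  push_neg at hgt
  have hKε : ε < f x₀ := hgt
  -- block containing x₀
  obtain ⟨i, hiQ, hxI⟩ := exists_block h0 hx₀.1 Q hQ (h1 ▸ hx₀.2)
  obtain ⟨j₁, hj₁Q, huiI⟩ := exists_block h0 hui.1 Q hQ (h1 ▸ hui.2)
  obtain ⟨j₂, hj₂Q, hujI⟩ := exists_block h0 huj.1 Q hQ (h1 ▸ huj.2)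
  set a := α i with ha_def
  set b := α (i + 1) with hb_def
  have ha0 : 0 ≤ a := h0 ▸ alpha_mono hinc i hiQ.le 0 (Nat.zero_le i)
  have hb1 : b ≤ 1 := h1 ▸ alpha_mono hinc Q le_rfl (i + 1) hiQ
  have hδab : δ ≤ b - a := Finset.inf'_le _ (Finset.mem_range.mpr hiQ)
  -- Lipschitz property of f on [a, b]
  have hflip : ∀ x ∈ Set.Icc a b, f x₀ - f x ≤ 4 * L * |x - x₀| := by
    intro x hx
    have hw1 : |w x ui - w x₀ ui| ≤ L * |x - x₀| := by
      have := hlip i hiQ j₁ hj₁Q x hx x₀ hxI ui huiI ui huiI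
      simpa using this
    have hw2 : |w x uj - w x₀ uj| ≤ L * |x - x₀| := by
      have := hlip i hiQ j₂ hj₂Q x hx x₀ hxI uj hujI uj hujI
      simpa using this
    have hb1 := hw01 x ui; have hb2 := hw01 x uj
    have hb3 := hw01 x₀ ui; have hb4 := hw01 x₀ uj
    simp only [Set.mem_Icc] at hb1 hb2 hb3 hb4
    have habs1 := abs_le.mp hw1
    have habs2 := abs_le.mp hw2
    simp only [hf_def]
    nlinarith [hb1.1, hb1.2, hb2.1, hb2.2, hb3.1, hb3.2, hb4.1, hb4.2,
      habs1.1, habs1.2, habs2.1, habs2.2, abs_nonneg (x - x₀)]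
  set m : ℝ := ε / (4 * L) with hm_def
  have hm_pos : 0 < m := div_pos hε (by linarith)
  have h4Lm : 4 * L * m = ε := by rw [hm_def]; field_simp
  have hmδ : m < (b - a) / 2 := by
    rw [hm_def, div_lt_iff₀ (by linarith : (0:ℝ) < 4 * L)]
    nlinarith
  -- key step: a linear lower bound on a subinterval forces the integral up
  have key : ∀ A B c d : ℝ, c ≤ d → 0 ≤ c → d ≤ 1 →
      (∀ t ∈ Set.Icc c d, A + B * t ≤ f t) →
      ε ^ 2 / (8 * L) < A * (d - c) + B * (d ^ 2 - c ^ 2) / 2 → False := by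
    intro A B c d hcd hc0 hd1 hptw hval
    have hlin : IntervalIntegrable (fun t : ℝ => A + B * t) volume c d :=
      Continuous.intervalIntegrable (continuous_const.add (continuous_const.mul continuous_id')) c d
    have hmono : (∫ t in c..d, (A + B * t)) ≤ ∫ t in c..d, f t :=
      intervalIntegral.integral_mono_on hcd hlin (hf_int c d) hptw
    have hadd1 : (∫ t in (0:ℝ)..c, f t) + (∫ t in c..d, f t) = ∫ t in (0:ℝ)..d, f t :=
      intervalIntegral.integral_add_adjacent_intervals (hf_int 0 c) (hf_int c d)
    have hadd2 : (∫ t in (0:ℝ)..d, f t) + (∫ t in d..1, f t) = ∫ t in (0:ℝ)..1, f t :=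
      intervalIntegral.integral_add_adjacent_intervals (hf_int 0 d) (hf_int d 1)
    have hnn1 : 0 ≤ ∫ t in (0:ℝ)..c, f t :=
      intervalIntegral.integral_nonneg hc0 (fun u _ => hf_nonneg u)
    have hnn2 : 0 ≤ ∫ t in d..1, f t :=
      intervalIntegral.integral_nonneg hd1 (fun u _ => hf_nonneg u)
    rw [integral_linear] at hmono
    linarith
  have hval_eq : ε ^ 2 / (8 * L) = m * ε / 2 := by
    rw [hm_def]; field_simp; ring
  set K : ℝ := f x₀ with hK_def
  rcases le_or_gt x₀ ((a + b) / 2) with hside | hside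
  · -- room to the right: J = [x₀, x₀ + m]
    have hdb : x₀ + m ≤ b := by linarith
    refine key (K + 4 * L * x₀) (-(4 * L)) x₀ (x₀ + m) (by linarith) hx₀.1
      (by linarith) ?_ ?_
    · intro t ht
      have htab : t ∈ Set.Icc a b := ⟨hxI.1.trans ht.1, ht.2.trans hdb⟩
      have := hflip t htab
      rw [abs_of_nonneg (by linarith [ht.1] : (0:ℝ) ≤ t - x₀)] at this
      linarith
    · rw [hval_eq]; nlinarith [mul_pos hm_pos (sub_pos.mpr hKε)]
  · -- room to the left: J = [x₀ - m, x₀]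
    have hca : a ≤ x₀ - m := by linarith
    refine key (K - 4 * L * x₀) (4 * L) (x₀ - m) x₀ (by linarith)
      (by linarith) hx₀.2 ?_ ?_
    · intro t ht
      have htab : t ∈ Set.Icc a b := ⟨hca.trans ht.1, ht.2.trans hxI.2⟩
      have := hflip t htab
      rw [abs_of_nonpos (by linarith [ht.2] : t - x₀ ≤ 0)] at this
      linarith
    · rw [hval_eq]; nlinarith [mul_pos hm_pos (sub_pos.mpr hKε)]
end

section
/- Let w be a piecewise Lipschitz graphon with constant L > 0, Lipschitz intervals I_1,…,I_Q, and δ = min_k |α_k − α_{k−1}|. For x,y ∈ [0,1] define d^c(x,y) = ∫₀¹ (w(s,x) − w(s,y))² ds and d^r(x,y) = ∫₀¹ (w(x,t) − w(y,t))² dt. Let ε > 0 satisfy 0 < (ε/2)² < 2δL and let u_{i_p}, u_{i_v}, u_{j_p}, u_{j_v} ∈ [0,1]. If d^c(u_{i_p},u_{i_v}) ≤ ε⁴/(128L), d^r(u_{i_p},u_{i_v}) ≤ ε⁴/(128L), d^c(u_{j_p},u_{j_v}) ≤ ε⁴/(128L) and d^r(u_{j_p},u_{j_v}) ≤ ε⁴/(128L),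 then |w(u_{i_v},u_{j_v}) − w(u_{i_p},u_{j_p})| ≤ ε. -/
open MeasureTheory

lemma monoAlpha (Q : ℕ) (α : ℕ → ℝ) (hmono : ∀ k < Q, α k < α (k + 1)) :
    ∀ k m, k ≤ m → m ≤ Q → α k ≤ α m := by
  intro k m hkm hmQ
  induction m with
  | zero => simp_all
  | succ n ih =>
    rcases Nat.lt_or_ge k (n+1) with h | h
    · have h1 : α k ≤ α n := ih (Nat.lt_succ_iff.mp h) (le_trans (Nat.le_succ n) hmQ)
      have h2 : α n < α (n+1) := hmono n (Nat.lt_of_lt_of_le (Nat.lt_succ_self n) hmQ)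
      linarith
    · have : k = n + 1 := le_antisymm hkm h
      simp [this]

lemma exists_block_s13 (Q : ℕ) (hQ : 0 < Q) (α : ℕ → ℝ) (h0 : α 0 = 0) (h1 : α Q = 1)
    (t : ℝ) (ht0 : 0 ≤ t) (ht1 : t ≤ 1) :
    ∃ j < Q, α j ≤ t ∧ t ≤ α (j + 1) := by
  set S := (Finset.range Q).filter (fun k => α k ≤ t) with hS
  have hne : S.Nonempty := ⟨0, by simp [hS, hQ, h0, ht0]⟩
  set j := S.max' hne with hj
  have hjS : j ∈ S := S.max'_mem hne
  have hjQ : j < Q := Finset.mem_range.mp (Finset.mem_filter.mp hjS).1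
  have hjt : α j ≤ t := (Finset.mem_filter.mp hjS).2
  refine ⟨j, hjQ, hjt, ?_⟩
  rcases Nat.lt_or_ge (j+1) Q with h | h
  · by_contra hc
    push_neg at hc
    have : j + 1 ∈ S := Finset.mem_filter.mpr ⟨Finset.mem_range.mpr h, hc.le⟩
    have := S.le_max' _ this
    omega
  · have : j + 1 = Q := by omega
    rw [this, h1]; exact ht1

lemma key_lemma (f : ℝ → ℝ) (hf_meas : Measurable f) (hbd : ∀ s, |f s| ≤ 1)
    (L δ ε : ℝ) (hL : 0 < L) (hδ : 0 < δ) (hε : 0 < ε) (hε1 : ε ≤ 1)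
    (hεδ : ε ^ 2 / (8 * L) < δ)
    (t c d : ℝ) (hct : c ≤ t) (htd : t ≤ d) (hc0 : 0 ≤ c) (hd1 : d ≤ 1)
    (hδcd : δ ≤ d - c)
    (hlip : ∀ s ∈ Set.Icc c d, |f s - f t| ≤ 2 * L * |s - t|)
    (hint : (∫ s in (0:ℝ)..1, (f s) ^ 2) ≤ ε ^ 4 / (128 * L)) :
    |f t| ≤ ε / 2 := by
  by_contra h
  push_neg at h
  set a := |f t| with ha
  have ha0 : 0 < a := lt_trans (by positivity) h
  set r := min (a / (4 * L)) (d - c) with hr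
  have hr0 : 0 < r := lt_min (by positivity) (by linarith)
  set p := max c (t - r) with hp
  set q := min d (t + r) with hq
  have hpt : p ≤ t := max_le hct (by linarith)
  have htq : t ≤ q := le_min htd (by linarith)
  have hpq : p ≤ q := le_trans hpt htq
  have hcp : c ≤ p := le_max_left _ _
  have hqd : q ≤ d := min_le_left _ _
  have hlen : r ≤ q - p := by
    have hrdc : r ≤ d - c := min_le_right _ _
    rcases le_total (t + r) d with h1 | h1
    · have : q = t + r := min_eq_right h1
      rw [this]; linarith
    · have hqd' : q = d := min_eq_left h1
      rcases le_total (t - r) c with h2 | h2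
      · have : p = c := max_eq_left h2
        rw [hqd', this]; linarith
      · have : p = t - r := max_eq_right h2
        rw [hqd', this]; linarith
  have hpoint : ∀ s ∈ Set.Icc p q, a ^ 2 / 4 ≤ (f s) ^ 2 := by
    intro s hs
    have hscd : s ∈ Set.Icc c d := ⟨le_trans hcp hs.1, le_trans hs.2 hqd⟩
    have h1 : |f s - f t| ≤ 2 * L * |s - t| := hlip s hscd
    have h2 : |s - t| ≤ r := by
      rw [abs_sub_le_iff]
      constructor
      · have : s ≤ t + r := le_trans hs.2 (min_le_right _ _); linarith
      · have : t - r ≤ s := le_trans (le_max_right c (t - r)) hs.1; linarith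
    have h3 : |f s - f t| ≤ 2 * L * (a / (4 * L)) := by
      calc |f s - f t| ≤ 2 * L * |s - t| := h1
        _ ≤ 2 * L * r := mul_le_mul_of_nonneg_left h2 (by positivity)
        _ ≤ 2 * L * (a / (4 * L)) :=
            mul_le_mul_of_nonneg_left (min_le_left _ _) (by positivity)
    have h4 : 2 * L * (a / (4 * L)) = a / 2 := by field_simp; ring
    have h5 : a / 2 ≤ |f s| := by
      have := abs_sub_abs_le_abs_sub (f t) (f s)
      rw [abs_sub_comm (f t) (f s)] at this
      rw [h4] at h3
      linarith
    calc a ^ 2 / 4 = (a / 2) ^ 2 := by ring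
      _ ≤ |f s| ^ 2 := pow_le_pow_left₀ (by positivity) h5 2
      _ = (f s) ^ 2 := sq_abs _
  have hmeas2 : Measurable (fun s => (f s) ^ 2) := hf_meas.pow_const 2
  have hii : IntervalIntegrable (fun s => (f s) ^ 2) volume 0 1 := by
    rw [intervalIntegrable_iff]
    apply Measure.integrableOn_of_bounded (M := 1)
    · rw [Set.uIoc_of_le (by norm_num : (0:ℝ) ≤ 1)]
      exact measure_Ioc_lt_top.ne
    · exact hmeas2.aestronglyMeasurable
    · filter_upwards with x
      have hx := hbd x
      rw [Real.norm_eq_abs, abs_pow]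
      nlinarith [abs_nonneg (f x)]
  have hii' : IntervalIntegrable (fun s => (f s) ^ 2) volume p q := by
    apply hii.mono_set
    rw [Set.uIcc_of_le hpq, Set.uIcc_of_le (by norm_num : (0:ℝ) ≤ 1)]
    exact Set.Icc_subset_Icc (le_trans hc0 hcp) (le_trans hqd hd1)
  have hmono_int : (∫ s in p..q, (f s) ^ 2) ≤ ∫ s in (0:ℝ)..1, (f s) ^ 2 := by
    apply intervalIntegral.integral_mono_interval (le_trans hc0 hcp) hpq (le_trans hqd hd1)
    · filter_upwards with x; positivity
    · exact hii
  have hlower : a ^ 2 / 4 * (q - p) ≤ ∫ s in p..q, (f s) ^ 2 := by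
    have := intervalIntegral.integral_mono_on hpq
      (intervalIntegrable_const (c := a ^ 2 / 4)) hii' hpoint
    rw [intervalIntegral.integral_const] at this
    rw [mul_comm]
    simpa using this
  have hchain : a ^ 2 / 4 * r ≤ ε ^ 4 / (128 * L) := by
    have := mul_le_mul_of_nonneg_left hlen (by positivity : (0:ℝ) ≤ a ^ 2 / 4)
    linarith
  rcases le_total (a / (4 * L)) (d - c) with hcase | hcase
  · have hre : r = a / (4 * L) := min_eq_left hcase
    rw [hre] at hchain
    have e : a ^ 2 / 4 * (a / (4 * L)) = a ^ 3 / (16 * L) := by field_simp; ring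
    rw [e] at hchain
    have hch : a ^ 3 * (128 * L) ≤ ε ^ 4 * (16 * L) :=
      (div_le_div_iff₀ (by positivity) (by positivity)).mp hchain
    have h9 : ε ^ 4 ≤ ε ^ 3 := pow_le_pow_of_le_one hε.le hε1 (by norm_num)
    have h8 : ε ^ 3 / 8 < a ^ 3 := by
      calc ε ^ 3 / 8 = (ε / 2) ^ 3 := by ring
        _ < a ^ 3 := pow_lt_pow_left₀ h (by positivity) (by norm_num)
    have k1 := mul_le_mul_of_nonneg_right h9 (by positivity : (0:ℝ) ≤ 16 * L)
    have k2 := mul_lt_mul_of_pos_right h8 (by positivity : (0:ℝ) < 16 * L)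
    nlinarith
  · have hre : r = d - c := min_eq_right hcase
    rw [hre] at hchain
    have hstep : a ^ 2 / 4 * δ ≤ a ^ 2 / 4 * (d - c) :=
      mul_le_mul_of_nonneg_left hδcd (by positivity)
    have h9 : ε ^ 4 / (128 * L) = ε ^ 2 / 16 * (ε ^ 2 / (8 * L)) := by
      field_simp; ring
    have h8 : ε ^ 2 / 16 < a ^ 2 / 4 := by
      have : (ε / 2) ^ 2 < a ^ 2 := pow_lt_pow_left₀ h (by positivity) (by norm_num)
      nlinarith
    have h10 : ε ^ 2 / 16 * (ε ^ 2 / (8 * L)) < a ^ 2 / 4 * δ :=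
      mul_lt_mul'' h8 hεδ (by positivity) (by positivity)
    linarith

theorem graphon_value_close_of_slices_close
    (w : ℝ → ℝ → ℝ) (hw_meas : Measurable fun p : ℝ × ℝ => w p.1 p.2)
    (hw01 : ∀ x y, w x y ∈ Set.Icc (0:ℝ) 1)
    (L : ℝ) (hL : 0 < L) (Q : ℕ) (hQ : 0 < Q) (α : ℕ → ℝ)
    (hpl : PiecewiseLipschitz w L Q α)
    (ε : ℝ) (hε : 0 < ε)
    (hεδ : (ε / 2) ^ 2 < 2 * ((Finset.range Q).inf' (Finset.nonempty_range_iff.mpr hQ.ne')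
      fun k => α (k + 1) - α k) * L)
    (uip uiv ujp ujv : ℝ)
    (huip : uip ∈ Set.Icc (0:ℝ) 1) (huiv : uiv ∈ Set.Icc (0:ℝ) 1)
    (hujp : ujp ∈ Set.Icc (0:ℝ) 1) (hujv : ujv ∈ Set.Icc (0:ℝ) 1)
    (hci : (∫ s in (0:ℝ)..1, (w s uip - w s uiv) ^ 2) ≤ ε ^ 4 / (128 * L))
    (hri : (∫ t in (0:ℝ)..1, (w uip t - w uiv t) ^ 2) ≤ ε ^ 4 / (128 * L))
    (hcj : (∫ s in (0:ℝ)..1, (w s ujp - w s ujv) ^ 2) ≤ ε ^ 4 / (128 * L))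
    (hrj : (∫ t in (0:ℝ)..1, (w ujp t - w ujv t) ^ 2) ≤ ε ^ 4 / (128 * L)) :
    |w uiv ujv - w uip ujp| ≤ ε := by
  obtain ⟨hα0, hαQ, hαmono, hlip⟩ := hpl
  -- trivial case ε ≥ 1
  rcases le_or_gt 1 ε with hε1 | hε1
  · have h1 := hw01 uiv ujv
    have h2 := hw01 uip ujp
    rw [abs_sub_le_iff]
    constructor <;> linarith [h1.1, h1.2, h2.1, h2.2]
  · -- δ
    set δ := (Finset.range Q).inf' (Finset.nonempty_range_iff.mpr hQ.ne')
      (fun k => α (k + 1) - α k) with hδdef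
    have hδpos : 0 < δ := by
      rw [hδdef, Finset.lt_inf'_iff]
      intro k hk
      have := hαmono k (Finset.mem_range.mp hk)
      linarith
    have hδle : ∀ k, k < Q → δ ≤ α (k + 1) - α k := by
      intro k hk
      exact Finset.inf'_le _ (Finset.mem_range.mpr hk)
    have hεδ' : ε ^ 2 / (8 * L) < δ := by
      rw [div_lt_iff₀ (by positivity)]
      nlinarith
    have hmono' := monoAlpha Q α hαmono
    -- blocks for each point
    obtain ⟨ip, hipQ, hip1, hip2⟩ := exists_block_s13 Q hQ α hα0 hαQ uip huip.1 huip.2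
    obtain ⟨iv, hivQ, hiv1, hiv2⟩ := exists_block_s13 Q hQ α hα0 hαQ uiv huiv.1 huiv.2
    obtain ⟨jp, hjpQ, hjp1, hjp2⟩ := exists_block_s13 Q hQ α hα0 hαQ ujp hujp.1 hujp.2
    obtain ⟨jv, hjvQ, hjv1, hjv2⟩ := exists_block_s13 Q hQ α hα0 hαQ ujv hujv.1 hujv.2
    -- step 1: |w uip ujv - w uiv ujv| ≤ ε/2, using f₁ t' = w uip t' - w uiv t' at t = ujv
    have step1 : |w uip ujv - w uiv ujv| ≤ ε / 2 := by
      have hm : Measurable (fun t' : ℝ => w uip t' - w uiv t') := by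
        have h1 : Measurable (fun t' : ℝ => w uip t') :=
          hw_meas.comp (measurable_const.prodMk measurable_id)
        have h2 : Measurable (fun t' : ℝ => w uiv t') :=
          hw_meas.comp (measurable_const.prodMk measurable_id)
        exact h1.sub h2
      refine key_lemma _ hm ?_ L δ ε hL hδpos hε hε1.le hεδ' ujv (α jv) (α (jv + 1))
        hjv1 hjv2 ?_ ?_ ?_ ?_ hri
      · intro s
        have h1 := hw01 uip s; have h2 := hw01 uiv s
        rw [abs_sub_le_iff]
        constructor <;> linarith [h1.1, h1.2, h2.1, h2.2]
      · have h := hmono' 0 jv (Nat.zero_le _) hjvQ.le; rw [hα0] at h; exact h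
      · have h := hmono' (jv + 1) Q hjvQ (le_refl Q); rw [hαQ] at h; exact h
      · exact hδle jv hjvQ
      · intro s hs
        have l1 : |w uip s - w uip ujv| ≤ L * (|uip - uip| + |s - ujv|) :=
          hlip ip hipQ jv hjvQ uip ⟨hip1, hip2⟩ uip ⟨hip1, hip2⟩ s hs ujv ⟨hjv1, hjv2⟩
        have l2 : |w uiv s - w uiv ujv| ≤ L * (|uiv - uiv| + |s - ujv|) :=
          hlip iv hivQ jv hjvQ uiv ⟨hiv1, hiv2⟩ uiv ⟨hiv1, hiv2⟩ s hs ujv ⟨hjv1, hjv2⟩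
        simp only [sub_self, abs_zero, zero_add] at l1 l2
        calc |w uip s - w uiv s - (w uip ujv - w uiv ujv)|
            = |(w uip s - w uip ujv) - (w uiv s - w uiv ujv)| := by congr 1; ring
          _ ≤ |w uip s - w uip ujv| + |w uiv s - w uiv ujv| := abs_sub _ _
          _ ≤ L * |s - ujv| + L * |s - ujv| := add_le_add l1 l2
          _ = 2 * L * |s - ujv| := by ring
    -- step 2: |w uip ujp - w uip ujv| ≤ ε/2, using f₂ s = w s ujp - w s ujv at t = uip
    have step2 : |w uip ujp - w uip ujv| ≤ ε / 2 := by
      have hm : Measurable (fun s : ℝ => w s ujp - w s ujv) := by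
        have h1 : Measurable (fun s : ℝ => w s ujp) :=
          hw_meas.comp (measurable_id.prodMk measurable_const)
        have h2 : Measurable (fun s : ℝ => w s ujv) :=
          hw_meas.comp (measurable_id.prodMk measurable_const)
        exact h1.sub h2
      refine key_lemma _ hm ?_ L δ ε hL hδpos hε hε1.le hεδ' uip (α ip) (α (ip + 1))
        hip1 hip2 ?_ ?_ ?_ ?_ hcj
      · intro s
        have h1 := hw01 s ujp; have h2 := hw01 s ujv
        rw [abs_sub_le_iff]
        constructor <;> linarith [h1.1, h1.2, h2.1, h2.2]
      · have h := hmono' 0 ip (Nat.zero_le _) hipQ.le; rw [hα0] at h; exact h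
      · have h := hmono' (ip + 1) Q hipQ (le_refl Q); rw [hαQ] at h; exact h
      · exact hδle ip hipQ
      · intro s hs
        have l1 : |w s ujp - w uip ujp| ≤ L * (|s - uip| + |ujp - ujp|) :=
          hlip ip hipQ jp hjpQ s hs uip ⟨hip1, hip2⟩ ujp ⟨hjp1, hjp2⟩ ujp ⟨hjp1, hjp2⟩
        have l2 : |w s ujv - w uip ujv| ≤ L * (|s - uip| + |ujv - ujv|) :=
          hlip ip hipQ jv hjvQ s hs uip ⟨hip1, hip2⟩ ujv ⟨hjv1, hjv2⟩ ujv ⟨hjv1, hjv2⟩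
        simp only [sub_self, abs_zero, add_zero] at l1 l2
        calc |w s ujp - w s ujv - (w uip ujp - w uip ujv)|
            = |(w s ujp - w uip ujp) - (w s ujv - w uip ujv)| := by congr 1; ring
          _ ≤ |w s ujp - w uip ujp| + |w s ujv - w uip ujv| := abs_sub _ _
          _ ≤ L * |s - uip| + L * |s - uip| := add_le_add l1 l2
          _ = 2 * L * |s - uip| := by ring
    calc |w uiv ujv - w uip ujp|
        ≤ |w uiv ujv - w uip ujv| + |w uip ujv - w uip ujp| := abs_sub_le _ _ _
      _ ≤ ε / 2 + ε / 2 := add_le_add (by rw [abs_sub_comm]; exact step1)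
          (by rw [abs_sub_comm]; exact step2)
      _ = ε := by ring
end

section
/- Let w be a piecewise Lipschitz graphon with constant L > 0, Lipschitz intervals I_1,…,I_Q, and δ = min_k |α_k − α_{k−1}|. For x,y ∈ [0,1] define d^c(x,y) = ∫₀¹ (w(s,x) − w(s,y))² ds and d^r(x,y) = ∫₀¹ (w(x,t) − w(y,t))² dt. Let ε > 0 satisfy 0 < (ε/2)² < 2δL. Let A, B be nonempty finite multisets of points of [0,1] with designated pivots a₀ ∈ A and b₀ ∈ B, and suppose that d^c(a₀,a) ≤ ε⁴/(128L) and d^r(a₀,a) ≤ ε⁴/(128L) for every a ∈ A, and d^c(b₀,b) ≤ ε⁴/(128L) and d^r(b₀,b) ≤ ε⁴/(128L) for every b ∈ B. Then for every a ∈ A and b ∈ B: | (1/(|A||B|)) Σ_{x∈A} Σ_{y∈B} w(x,y) − w(a,b) | ≤ 2ε. -/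
open MeasureTheory

private lemma sq_intervalIntegrable (f : ℝ → ℝ) (hf : Measurable f) (hb : ∀ s, |f s| ≤ 1)
    (a b : ℝ) : IntervalIntegrable (fun s => (f s)^2) volume a b := by
  have hm : Measurable fun s => (f s)^2 := hf.pow_const 2
  constructor <;>
  · refine (integrable_const (1:ℝ)).mono' hm.aestronglyMeasurable ?_
    filter_upwards with s
    have := hb s
    rw [Real.norm_eq_abs, abs_pow]
    nlinarith [abs_nonneg (f s)]

private lemma alpha_mono_s14 {Q : ℕ} {α : ℕ → ℝ} (hinc : ∀ k < Q, α k < α (k + 1)) :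
    ∀ i j, i ≤ j → j ≤ Q → α i ≤ α j := by
  intro i j hij hjQ
  induction j, hij using Nat.le_induction with
  | base => exact le_rfl
  | succ n hn ih => exact (ih (by omega)).trans (hinc n (by omega)).le

private lemma exists_block_s14 {Q : ℕ} (hQ : 0 < Q) {α : ℕ → ℝ} (h0 : α 0 = 0) (hQ1 : α Q = 1)
    {u : ℝ} (hu : u ∈ Set.Icc (0:ℝ) 1) :
    ∃ k < Q, u ∈ Set.Icc (α k) (α (k + 1)) := by
  have aux : ∀ n, 0 < n → n ≤ Q → u ≤ α n → ∃ k < n, α k ≤ u ∧ u ≤ α (k+1) := by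
    intro n
    induction n with
    | zero => intro h; omega
    | succ n ih =>
      intro _ hnQ hun
      by_cases hn : n = 0
      · subst hn
        exact ⟨0, by omega, by rw [h0]; exact hu.1, hun⟩
      · by_cases h : u ≤ α n
        · obtain ⟨k, hk, hk2⟩ := ih (Nat.pos_of_ne_zero hn) (by omega) h
          exact ⟨k, by omega, hk2⟩
        · exact ⟨n, by omega, (not_le.mp h).le, hun⟩
  obtain ⟨k, hk, h1, h2⟩ := aux Q hQ le_rfl (hQ1 ▸ hu.2)
  exact ⟨k, hk, h1, h2⟩

private lemma key_arith (L δ ε c : ℝ) (hL : 0 < L) (hε : 0 < ε) (hε1 : ε ≤ 1)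
    (hcon : ε / 2 < c) (hδε : ε ^ 2 / (8 * L) < δ) :
    ε ^ 4 / (128 * L) < min δ (c / (4 * L)) * (c ^ 2 / 4) := by
  have hc : 0 < c := lt_trans (by positivity) hcon
  have hε2 : ε ^ 2 < 8 * L * δ := by
    rw [div_lt_iff₀ (by positivity)] at hδε; linarith
  have hc2 : ε ^ 2 < 4 * c ^ 2 := by nlinarith
  rcases le_total δ (c / (4 * L)) with h | h
  · rw [min_eq_left h, div_lt_iff₀ (by positivity)]
    nlinarith [mul_lt_mul'' hε2 hc2 (sq_nonneg ε) (sq_nonneg ε)]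
  · rw [min_eq_right h,
      show c / (4 * L) * (c ^ 2 / 4) = c ^ 3 / (16 * L) by field_simp; ring,
      div_lt_div_iff₀ (by positivity) (by positivity)]
    have hε3 : ε ^ 3 < 8 * c ^ 3 := by
      nlinarith [sq_nonneg (ε + 2 * c), sq_nonneg (ε - 2 * c), mul_pos hε hc]
    have hε4 : ε ^ 4 ≤ ε ^ 3 := by nlinarith [pow_nonneg hε.le 3]
    nlinarith [mul_lt_mul_of_pos_right hε3 hL, mul_le_mul_of_nonneg_right hε4 hL.le]

private lemma key_pointwise (g : ℝ → ℝ) (hg : Measurable g) (hb : ∀ s, |g s| ≤ 1)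
    (L δ ε : ℝ) (hL : 0 < L) (hε : 0 < ε) (hε1 : ε ≤ 1)
    (Q : ℕ) (hQ : 0 < Q) (α : ℕ → ℝ) (h0 : α 0 = 0) (hQ1 : α Q = 1)
    (hinc : ∀ k < Q, α k < α (k + 1))
    (hδ : ∀ k < Q, δ ≤ α (k + 1) - α k) (hδε : ε ^ 2 / (8 * L) < δ)
    (hlip : ∀ k < Q, ∀ s₁ ∈ Set.Icc (α k) (α (k + 1)), ∀ s₂ ∈ Set.Icc (α k) (α (k + 1)),
      |g s₁ - g s₂| ≤ 2 * L * |s₁ - s₂|)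
    (hint : (∫ s in (0:ℝ)..1, (g s) ^ 2) ≤ ε ^ 4 / (128 * L)) :
    ∀ u ∈ Set.Icc (0:ℝ) 1, |g u| ≤ ε / 2 := by
  intro u hu
  by_contra hcon
  push_neg at hcon
  set c := |g u| with hc_def
  have hc : 0 < c := lt_trans (by positivity) hcon
  obtain ⟨k, hk, hblk⟩ := exists_block_s14 hQ h0 hQ1 hu
  set r := c / (4 * L) with hr_def
  have hr : 0 < r := by positivity
  set lo := max (α k) (u - r) with hlo_def
  set hi := min (α (k + 1)) (u + r) with hhi_def
  have hlou : lo ≤ u := max_le hblk.1 (by linarith)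
  have huhi : u ≤ hi := le_min hblk.2 (by linarith)
  have hlohi : lo ≤ hi := hlou.trans huhi
  have hlo0 : (0:ℝ) ≤ lo := by
    have h1 := alpha_mono_s14 hinc 0 k (Nat.zero_le _) hk.le
    rw [h0] at h1
    have h2 := le_max_left (α k) (u - r)
    linarith
  have hhi1 : hi ≤ 1 := by
    have h1 := alpha_mono_s14 hinc (k + 1) Q (by omega) le_rfl
    rw [hQ1] at h1
    have h2 := min_le_left (α (k + 1)) (u + r)
    linarith
  have hsub : ∀ s ∈ Set.Icc lo hi, c ^ 2 / 4 ≤ (g s) ^ 2 := by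
    intro s hs
    have hsk : s ∈ Set.Icc (α k) (α (k + 1)) :=
      ⟨(le_max_left _ _).trans hs.1, hs.2.trans (min_le_left _ _)⟩
    have hdist : |s - u| ≤ r := by
      rw [abs_le]
      constructor
      · have := (le_max_right (α k) (u - r)).trans hs.1; linarith
      · have := hs.2.trans (min_le_right (α (k + 1)) (u + r)); linarith
    have hlipu := hlip k hk s hsk u ⟨hblk.1, hblk.2⟩
    have h1 : |g s - g u| ≤ c / 2 := by
      calc |g s - g u| ≤ 2 * L * |s - u| := hlipu
        _ ≤ 2 * L * r := by nlinarith
        _ = c / 2 := by rw [hr_def]; field_simp; ring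
    have h2 : c / 2 ≤ |g s| := by
      have := abs_sub_abs_le_abs_sub (g u) (g s)
      rw [abs_sub_comm] at h1
      linarith
    calc c ^ 2 / 4 = (c / 2) ^ 2 := by ring
      _ ≤ |g s| ^ 2 := by nlinarith [abs_nonneg (g s)]
      _ = (g s) ^ 2 := sq_abs _
  have hlen : min δ r ≤ hi - lo := by
    have h1 := hδ k hk
    have h2 := min_le_left δ r
    have h3 := min_le_right δ r
    rcases max_choice (α k) (u - r) with h4 | h4 <;>
      rcases min_choice (α (k + 1)) (u + r) with h5 | h5 <;>
        rw [hlo_def, hhi_def, h4, h5] <;> linarith [hblk.1, hblk.2]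
  have hii1 := sq_intervalIntegrable g hg hb 0 1
  have hii2 := sq_intervalIntegrable g hg hb lo hi
  have hstep1 : (∫ s in lo..hi, (g s) ^ 2) ≤ ∫ s in (0:ℝ)..1, (g s) ^ 2 := by
    apply intervalIntegral.integral_mono_interval hlo0 hlohi hhi1
    · filter_upwards with s; positivity
    · exact hii1
  have hstep2 : (hi - lo) * (c ^ 2 / 4) ≤ ∫ s in lo..hi, (g s) ^ 2 := by
    have h := intervalIntegral.integral_mono_on (μ := volume) (f := fun _ => c ^ 2 / 4)
      (g := fun s => (g s) ^ 2) hlohi (intervalIntegrable_const) hii2 hsub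
    simp only [intervalIntegral.integral_const, smul_eq_mul] at h
    calc (hi - lo) * (c ^ 2 / 4) = (hi - lo) * (c ^ 2 / 4) := rfl
      _ ≤ ∫ s in lo..hi, (g s) ^ 2 := h
  have hchain : min δ r * (c ^ 2 / 4) ≤ ε ^ 4 / (128 * L) := by
    calc min δ r * (c ^ 2 / 4) ≤ (hi - lo) * (c ^ 2 / 4) := by nlinarith
      _ ≤ ∫ s in lo..hi, (g s) ^ 2 := hstep2
      _ ≤ ∫ s in (0:ℝ)..1, (g s) ^ 2 := hstep1
      _ ≤ ε ^ 4 / (128 * L) := hint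
  have hfinal := key_arith L δ ε c hL hε hε1 hcon hδε
  rw [hr_def] at hchain
  linarith
private lemma ms_sum_sub (s : Multiset ℝ) (f : ℝ → ℝ) (c : ℝ) :
    (s.map (fun y => f y - c)).sum = (s.map f).sum - (Multiset.card s : ℝ) * c := by
  induction s using Multiset.induction with
  | empty => simp
  | cons a s ih => simp only [Multiset.map_cons, Multiset.sum_cons, Multiset.card_cons, ih]
                   push_cast; ring

private lemma ms_sum_abs_le (s : Multiset ℝ) (f : ℝ → ℝ) (c : ℝ) (hc : 0 ≤ c)
    (h : ∀ x ∈ s, |f x| ≤ c) : |(s.map f).sum| ≤ (Multiset.card s : ℝ) * c := by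
  induction s using Multiset.induction with
  | empty => simp
  | cons a s ih =>
    simp only [Multiset.map_cons, Multiset.sum_cons, Multiset.card_cons]
    have h1 := abs_add_le (f a) (s.map f).sum
    have h2 := h a (Multiset.mem_cons_self a s)
    have h3 := ih (fun x hx => h x (Multiset.mem_cons_of_mem hx))
    push_cast
    linarith


theorem block_average_close_to_graphon_value
    (w : ℝ → ℝ → ℝ) (hw_meas : Measurable fun p : ℝ × ℝ => w p.1 p.2)
    (hw01 : ∀ x y, w x y ∈ Set.Icc (0:ℝ) 1)
    (L : ℝ) (hL : 0 < L) (Q : ℕ) (hQ : 0 < Q) (α : ℕ → ℝ)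
    (hpl : PiecewiseLipschitz w L Q α)
    (ε : ℝ) (hε : 0 < ε)
    (hεδ : (ε / 2) ^ 2 < 2 * ((Finset.range Q).inf' (Finset.nonempty_range_iff.mpr hQ.ne')
      fun k => α (k + 1) - α k) * L)
    (A B : Multiset ℝ) (hA : A ≠ 0) (hB : B ≠ 0)
    (hA01 : ∀ a ∈ A, a ∈ Set.Icc (0:ℝ) 1) (hB01 : ∀ b ∈ B, b ∈ Set.Icc (0:ℝ) 1)
    (a₀ b₀ : ℝ) (ha₀ : a₀ ∈ A) (hb₀ : b₀ ∈ B)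
    (hcA : ∀ a ∈ A, (∫ s in (0:ℝ)..1, (w s a₀ - w s a) ^ 2) ≤ ε ^ 4 / (128 * L))
    (hrA : ∀ a ∈ A, (∫ t in (0:ℝ)..1, (w a₀ t - w a t) ^ 2) ≤ ε ^ 4 / (128 * L))
    (hcB : ∀ b ∈ B, (∫ s in (0:ℝ)..1, (w s b₀ - w s b) ^ 2) ≤ ε ^ 4 / (128 * L))
    (hrB : ∀ b ∈ B, (∫ t in (0:ℝ)..1, (w b₀ t - w b t) ^ 2) ≤ ε ^ 4 / (128 * L)) :
    ∀ a ∈ A, ∀ b ∈ B,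
      |(1 / ((Multiset.card A : ℝ) * (Multiset.card B : ℝ))) *
          (Multiset.map (fun x => (Multiset.map (fun y => w x y) B).sum) A).sum
        - w a b| ≤ 2 * ε := by
  obtain ⟨h0, hQ1, hinc, hlipw⟩ := hpl
  set δ := ((Finset.range Q).inf' (Finset.nonempty_range_iff.mpr hQ.ne')
      fun k => α (k + 1) - α k) with hδdef
  have hδk : ∀ k < Q, δ ≤ α (k + 1) - α k := fun k hk =>
    Finset.inf'_le _ (Finset.mem_range.mpr hk)
  have hδpos : 0 < δ := by
    obtain ⟨k, hk⟩ := Finset.exists_mem_eq_inf' (Finset.nonempty_range_iff.mpr hQ.ne')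
      fun k => α (k + 1) - α k
    rw [hδdef, hk.2]
    have := hinc k (Finset.mem_range.mp hk.1)
    linarith
  have hdiff : ∀ x y x' y', |w x y - w x' y'| ≤ 1 := by
    intro x y x' y'
    have h1 := hw01 x y; have h2 := hw01 x' y'
    rw [Set.mem_Icc] at h1 h2
    rw [abs_le]; constructor <;> linarith
  intro a ha b hb
  -- pointwise bound for every pair
  have hpt : ∀ x ∈ A, ∀ y ∈ B, |w x y - w a b| ≤ 2 * ε := by
    intro x hx y hy
    rcases le_or_gt 1 (2 * ε) with hbig | hsmall
    · exact (hdiff _ _ _ _).trans hbig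
    · have hε1 : ε ≤ 1 := by linarith
      have hδε : ε ^ 2 / (8 * L) < δ := by
        rw [div_lt_iff₀ (by positivity)]
        nlinarith [hεδ]
      have hmeas1 : ∀ p : ℝ, Measurable fun s => w s p := fun p =>
        hw_meas.comp (measurable_id.prodMk measurable_const)
      have hmeas2 : ∀ p : ℝ, Measurable fun t => w p t := fun p =>
        hw_meas.comp (measurable_const.prodMk measurable_id)
      have col : ∀ p ∈ Set.Icc (0:ℝ) 1, ∀ q ∈ Set.Icc (0:ℝ) 1,
          (∫ s in (0:ℝ)..1, (w s p - w s q) ^ 2) ≤ ε ^ 4 / (128 * L) →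
          ∀ u ∈ Set.Icc (0:ℝ) 1, |w u p - w u q| ≤ ε / 2 := by
        intro p hp q hq hintpq
        refine key_pointwise (fun s => w s p - w s q) ((hmeas1 p).sub (hmeas1 q))
          (fun s => hdiff _ _ _ _) L δ ε hL hε hε1 Q hQ α h0 hQ1 hinc hδk hδε ?_ hintpq
        intro k hk s₁ hs₁ s₂ hs₂
        obtain ⟨i, hi, hpI⟩ := exists_block_s14 hQ h0 hQ1 hp
        obtain ⟨j, hj, hqI⟩ := exists_block_s14 hQ h0 hQ1 hq
        have h1 := hlipw k hk i hi s₁ hs₁ s₂ hs₂ p hpI p hpI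
        have h2 := hlipw k hk j hj s₁ hs₁ s₂ hs₂ q hqI q hqI
        simp only [sub_self, abs_zero, add_zero] at h1 h2
        have h3 : (w s₁ p - w s₁ q) - (w s₂ p - w s₂ q)
            = (w s₁ p - w s₂ p) - (w s₁ q - w s₂ q) := by ring
        rw [h3]
        calc |(w s₁ p - w s₂ p) - (w s₁ q - w s₂ q)|
            ≤ |w s₁ p - w s₂ p| + |w s₁ q - w s₂ q| := abs_sub _ _
          _ ≤ 2 * L * |s₁ - s₂| := by linarith
      have row : ∀ p ∈ Set.Icc (0:ℝ) 1, ∀ q ∈ Set.Icc (0:ℝ) 1,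
          (∫ t in (0:ℝ)..1, (w p t - w q t) ^ 2) ≤ ε ^ 4 / (128 * L) →
          ∀ u ∈ Set.Icc (0:ℝ) 1, |w p u - w q u| ≤ ε / 2 := by
        intro p hp q hq hintpq
        refine key_pointwise (fun t => w p t - w q t) ((hmeas2 p).sub (hmeas2 q))
          (fun t => hdiff _ _ _ _) L δ ε hL hε hε1 Q hQ α h0 hQ1 hinc hδk hδε ?_ hintpq
        intro k hk s₁ hs₁ s₂ hs₂
        obtain ⟨i, hi, hpI⟩ := exists_block_s14 hQ h0 hQ1 hp
        obtain ⟨j, hj, hqI⟩ := exists_block_s14 hQ h0 hQ1 hq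
        have h1 := hlipw i hi k hk p hpI p hpI s₁ hs₁ s₂ hs₂
        have h2 := hlipw j hj k hk q hqI q hqI s₁ hs₁ s₂ hs₂
        simp only [sub_self, abs_zero, zero_add] at h1 h2
        have h3 : (w p s₁ - w q s₁) - (w p s₂ - w q s₂)
            = (w p s₁ - w p s₂) - (w q s₁ - w q s₂) := by ring
        rw [h3]
        calc |(w p s₁ - w p s₂) - (w q s₁ - w q s₂)|
            ≤ |w p s₁ - w p s₂| + |w q s₁ - w q s₂| := abs_sub _ _
          _ ≤ 2 * L * |s₁ - s₂| := by linarith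
      have hx01 := hA01 x hx
      have ha01 := hA01 a ha
      have ha₀01 := hA01 a₀ ha₀
      have hy01 := hB01 y hy
      have hb01 := hB01 b hb
      have hb₀01 := hB01 b₀ hb₀
      have t1 : |w x y - w a₀ y| ≤ ε / 2 := by
        rw [abs_sub_comm]; exact row a₀ ha₀01 x hx01 (hrA x hx) y hy01
      have t2 : |w a₀ y - w a₀ b₀| ≤ ε / 2 := by
        rw [abs_sub_comm]; exact col b₀ hb₀01 y hy01 (hcB y hy) a₀ ha₀01
      have t3 : |w a₀ b₀ - w a b₀| ≤ ε / 2 := row a₀ ha₀01 a ha01 (hrA a ha) b₀ hb₀01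
      have t4 : |w a b₀ - w a b| ≤ ε / 2 :=
        col b₀ hb₀01 b hb01 (hcB b hb) a ha01
      have hsplit : w x y - w a b = (w x y - w a₀ y) + ((w a₀ y - w a₀ b₀)
          + ((w a₀ b₀ - w a b₀) + (w a b₀ - w a b))) := by ring
      rw [hsplit]
      have habs := (abs_add_le (w x y - w a₀ y) _).trans (add_le_add t1
        ((abs_add_le (w a₀ y - w a₀ b₀) _).trans (add_le_add t2
          ((abs_add_le (w a₀ b₀ - w a b₀) _).trans (add_le_add t3 t4)))))
      linarith
  -- assemble the average
  have hm : (0:ℝ) < (Multiset.card A : ℝ) := by exact_mod_cast Multiset.card_pos.mpr hA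
  have hn : (0:ℝ) < (Multiset.card B : ℝ) := by exact_mod_cast Multiset.card_pos.mpr hB
  set m := (Multiset.card A : ℝ)
  set n := (Multiset.card B : ℝ)
  set S := (Multiset.map (fun x => (Multiset.map (fun y => w x y) B).sum) A).sum with hSdef
  have hinner : ∀ x ∈ A,
      |(Multiset.map (fun y => w x y) B).sum - n * w a b| ≤ n * (2 * ε) := by
    intro x hx
    have h1 := ms_sum_sub B (fun y => w x y) (w a b)
    have h2 := ms_sum_abs_le B (fun y => w x y - w a b) (2 * ε) (by positivity)
      (fun y hy => hpt x hx y hy)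
    rw [h1] at h2
    exact h2
  have houter : |S - m * (n * w a b)| ≤ m * (n * (2 * ε)) := by
    have h1 := ms_sum_sub A (fun x => (Multiset.map (fun y => w x y) B).sum) (n * w a b)
    have h2 := ms_sum_abs_le A
      (fun x => (Multiset.map (fun y => w x y) B).sum - n * w a b) (n * (2 * ε))
      (by positivity) hinner
    rw [h1] at h2
    exact h2
  have hmn : (0:ℝ) < m * n := mul_pos hm hn
  have hrw : 1 / (m * n) * S - w a b = 1 / (m * n) * (S - m * (n * w a b)) := by
    field_simp
  rw [hrw, abs_mul, abs_of_pos (by positivity : (0:ℝ) < 1 / (m * n))]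
  calc 1 / (m * n) * |S - m * (n * w a b)| ≤ 1 / (m * n) * (m * (n * (2 * ε))) :=
        mul_le_mul_of_nonneg_left houter (by positivity)
    _ = 2 * ε := by field_simp
end
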